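/- arXiv:1912.09213 — 6 statements merged into one kernel-verified Lean document; each statement's English description precedes it below -/
import Mathlib

section
/- Let b : ℝ^d → ℝ^d be a C¹ ℤ^d-periodic vector field with flow X(t,x), and let μ be a Borel probability measure on the torus Y_d. Then μ is invariant for the flow if and only if ∫_{Y_d} b(y)·∇ψ(y) dμ(y) = 0 for every C¹ ℤ^d-periodic function ψ : ℝ^d → ℝ. -/
open MeasureTheory Filter Topology
open scoped RealInnerProductSpace

noncomputable section

/-- An integer vector `k ∈ ℤ^d` seen as a point of `ℝ^d`. -/
def intVec (d : ℕ) (k : Fin d → ℤ) : EuclideanSpace ℝ (Fin d) := WithLp.toLp 2 (fun i => (k i : ℝ))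

/-- A function on `ℝ^d` is `ℤ^d`-periodic. -/
def IsZdPeriodic {α : Type*} (d : ℕ) (f : EuclideanSpace ℝ (Fin d) → α) : Prop :=
  ∀ (x : EuclideanSpace ℝ (Fin d)) (k : Fin d → ℤ), f (x + intVec d k) = f x

/-- The unit cube `[0,1)^d`, a fundamental domain for the torus `Y_d = ℝ^d/ℤ^d`. -/
def unitCube (d : ℕ) : Set (EuclideanSpace ℝ (Fin d)) :=
  {x | ∀ i, x i ∈ Set.Ico (0 : ℝ) 1}

/-- A Borel probability measure on the torus `Y_d`, identified with a Borel probability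
measure on `ℝ^d` carried by the fundamental domain `[0,1)^d`. -/
def IsTorusMeasure {d : ℕ} (μ : Measure (EuclideanSpace ℝ (Fin d))) : Prop :=
  IsProbabilityMeasure μ ∧ μ (unitCube d)ᶜ = 0

/-- A measure on the torus is invariant for the flow `X` if
`∫ φ(X(t,y)) dμ(y) = ∫ φ dμ` for all `t` and all continuous `ℤ^d`-periodic `φ`. -/
def IsInvariantMeasure {d : ℕ} (X : ℝ → EuclideanSpace ℝ (Fin d) → EuclideanSpace ℝ (Fin d))
    (μ : Measure (EuclideanSpace ℝ (Fin d))) : Prop :=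
  ∀ (t : ℝ) (φ : EuclideanSpace ℝ (Fin d) → ℝ), Continuous φ → IsZdPeriodic d φ →
    ∫ y, φ (X t y) ∂μ = ∫ y, φ y ∂μ

namespace Stmt7
open Metric Set Real

variable {d : ℕ}

lemma euclidean_add_apply (x : EuclideanSpace ℝ (Fin d)) (k : Fin d → ℤ) (i : Fin d) :
    (x + intVec d k) i = x i + (k i : ℝ) := rfl

lemma isCompact_cube : IsCompact {x : EuclideanSpace ℝ (Fin d) | ∀ i, x i ∈ Set.Icc (0:ℝ) 1} := by
  have h1 : IsCompact (Set.pi Set.univ (fun _ : Fin d => Set.Icc (0:ℝ) 1)) :=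
    isCompact_univ_pi fun _ => isCompact_Icc
  have h2 := (EuclideanSpace.equiv (Fin d) ℝ).toHomeomorph.isCompact_preimage.mpr h1
  convert h2 using 1
  ext x
  simp only [Set.mem_setOf_eq, Set.mem_preimage, Set.mem_pi, Set.mem_univ, forall_true_left]
  rfl

lemma exists_bound_of_periodic {F : Type*} [NormedAddCommGroup F]
    (f : EuclideanSpace ℝ (Fin d) → F) (hf : Continuous f) (hper : IsZdPeriodic d f) :
    ∃ C : ℝ, 0 ≤ C ∧ ∀ x, ‖f x‖ ≤ C := by
  obtain ⟨C, hC⟩ := isCompact_cube.exists_bound_of_continuousOn hf.continuousOn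
  refine ⟨max C 0, le_max_right _ _, fun x => ?_⟩
  let y : EuclideanSpace ℝ (Fin d) := WithLp.toLp 2 (fun i => Int.fract (x i))
  have hxy : f x = f y := by
    have hx : x = y + intVec d (fun i => ⌊x i⌋) := by
      ext i
      rw [euclidean_add_apply]
      show x i = Int.fract (x i) + (⌊x i⌋ : ℝ)
      rw [Int.fract]
      ring
    conv_lhs => rw [hx]
    exact hper _ _
  rw [hxy]
  refine le_trans (hC _ fun i => ⟨Int.fract_nonneg _, (Int.fract_lt_one _).le⟩) (le_max_left _ _)


lemma isZdPeriodic_fderiv {F : Type*} [NormedAddCommGroup F] [NormedSpace ℝ F]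
    {f : EuclideanSpace ℝ (Fin d) → F} (hf : Differentiable ℝ f) (hper : IsZdPeriodic d f) :
    IsZdPeriodic d (fderiv ℝ f) := by
  intro x k
  have h1 : (fun y => f (y + intVec d k)) = f := funext fun y => hper y k
  have ht : HasFDerivAt (fun y : EuclideanSpace ℝ (Fin d) => y + intVec d k)
      (ContinuousLinearMap.id ℝ (EuclideanSpace ℝ (Fin d))) x :=
    (hasFDerivAt_id x).add_const _
  have h2 : HasFDerivAt (fun y => f (y + intVec d k)) (fderiv ℝ f (x + intVec d k)) x := by
    exact (hf (x + intVec d k)).hasFDerivAt.comp x ht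
  rw [h1] at h2
  exact h2.fderiv.symm

lemma lipschitz_of_contDiff_periodic {F : Type*} [NormedAddCommGroup F] [NormedSpace ℝ F]
    {f : EuclideanSpace ℝ (Fin d) → F} (hf : ContDiff ℝ 1 f) (hper : IsZdPeriodic d f) :
    ∃ K : NNReal, 1 ≤ (K : ℝ) ∧ LipschitzWith K f := by
  obtain ⟨C, hC0, hC⟩ := exists_bound_of_periodic (fderiv ℝ f) (hf.continuous_fderiv one_ne_zero)
    (isZdPeriodic_fderiv (hf.differentiable one_ne_zero) hper)
  refine ⟨⟨max C 1, by positivity⟩, le_max_right _ _, ?_⟩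
  apply lipschitzWith_of_nnnorm_fderiv_le (hf.differentiable one_ne_zero)
  intro x
  show ‖fderiv ℝ f x‖ ≤ max C 1
  exact (hC x).trans (le_max_left _ _)

lemma inner_gradient_eq (g : EuclideanSpace ℝ (Fin d) → ℝ) (y v : EuclideanSpace ℝ (Fin d)) :
    (⟪v, gradient g y⟫ : ℝ) = fderiv ℝ g y v := by
  rw [real_inner_comm]
  exact InnerProductSpace.toDual_symm_apply

section Flow

variable {K : NNReal} {v : EuclideanSpace ℝ (Fin d) → EuclideanSpace ℝ (Fin d)}
  {X : ℝ → EuclideanSpace ℝ (Fin d) → EuclideanSpace ℝ (Fin d)}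

lemma flow_unique (hv : LipschitzWith K v) {f g : ℝ → EuclideanSpace ℝ (Fin d)}
    (hf : ∀ t, HasDerivAt f (v (f t)) t) (hg : ∀ t, HasDerivAt g (v (g t)) t)
    (h0 : f 0 = g 0) (t : ℝ) : f t = g t := by
  have habs : |t| < |t| + 1 := by linarith
  have h := ODE_solution_unique_of_mem_Ioo (v := fun _ => v)
    (s := fun _ => Set.univ) (K := K) (f := f) (g := g) (t₀ := 0)
    (a := -(|t| + 1)) (b := |t| + 1)
    (fun _ _ => hv.lipschitzOnWith)
    (by constructor <;> [linarith [abs_nonneg t]; linarith [abs_nonneg t]])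
    (fun u _ => ⟨hf u, trivial⟩) (fun u _ => ⟨hg u, trivial⟩) h0
  exact h (abs_lt.mp habs)

lemma flow_dist_nonneg (hv : LipschitzWith K v) (hX0 : ∀ x, X 0 x = x)
    (hX' : ∀ x t, HasDerivAt (fun s => X s x) (v (X t x)) t)
    (x y : EuclideanSpace ℝ (Fin d)) {t : ℝ} (ht : 0 ≤ t) :
    dist (X t x) (X t y) ≤ dist x y * Real.exp (K * t) := by
  have h := dist_le_of_trajectories_ODE (v := fun _ => v) (f := fun u => X u x)
    (g := fun u => X u y) (a := 0) (b := t) (δ := dist x y) (fun _ => hv)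
    (Continuous.continuousOn (continuous_iff_continuousAt.mpr fun u => (hX' x u).continuousAt))
    (fun u _ => (hX' x u).hasDerivWithinAt)
    (Continuous.continuousOn (continuous_iff_continuousAt.mpr fun u => (hX' y u).continuousAt))
    (fun u _ => (hX' y u).hasDerivWithinAt)
    (by show dist (X 0 x) (X 0 y) ≤ dist x y; rw [hX0 x, hX0 y])
    t ⟨ht, le_rfl⟩
  simpa using h

lemma flow_pert_nonneg (hv : LipschitzWith K v) (hK : (K : ℝ) ≠ 0) (hX0 : ∀ x, X 0 x = x)
    (hX' : ∀ x t, HasDerivAt (fun s => X s x) (v (X t x)) t)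
    (y z : EuclideanSpace ℝ (Fin d)) {t : ℝ} (ht : 0 ≤ t) :
    dist (X t y - z) (X t (y - z)) ≤ ‖z‖ * (Real.exp (K * t) - 1) := by
  have hfd : ∀ u, HasDerivAt (fun s => X s y - z) (v (X u y)) u :=
    fun u => (hX' y u).sub_const z
  have f_bound : ∀ u ∈ Set.Ico (0:ℝ) t, dist (v (X u y)) (v (X u y - z)) ≤ K * ‖z‖ := by
    intro u _
    calc dist (v (X u y)) (v (X u y - z)) ≤ K * dist (X u y) (X u y - z) := hv.dist_le_mul _ _
    _ = K * ‖z‖ := by rw [dist_eq_norm]; simp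
  have h := dist_le_of_approx_trajectories_ODE (v := fun _ => v)
    (f := fun u => X u y - z) (f' := fun u => v (X u y))
    (g := fun u => X u (y - z)) (g' := fun u => v (X u (y-z)))
    (a := 0) (b := t) (δ := 0) (εf := (K : ℝ) * ‖z‖) (εg := 0)
    (fun _ => hv)
    (Continuous.continuousOn (continuous_iff_continuousAt.mpr fun u => (hfd u).continuousAt))
    (fun u _ => (hfd u).hasDerivWithinAt)
    f_bound
    (Continuous.continuousOn (continuous_iff_continuousAt.mpr
      fun u => (hX' (y - z) u).continuousAt))
    (fun u _ => (hX' (y - z) u).hasDerivWithinAt)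
    (fun u _ => by simp)
    (by show dist (X 0 y - z) (X 0 (y - z)) ≤ 0; rw [hX0 y, hX0 (y - z)]; simp)
    t ⟨ht, le_rfl⟩
  rw [gronwallBound_of_K_ne_0 hK] at h
  calc dist (X t y - z) (X t (y - z))
      ≤ 0 * Real.exp (K * (t - 0)) + ((K : ℝ) * ‖z‖ + 0) / K * (Real.exp (K * (t - 0)) - 1) := h
    _ = ‖z‖ * (Real.exp (K * t) - 1) := by
        rw [sub_zero, zero_mul, zero_add, add_zero, mul_div_cancel_left₀ _ hK]

end Flow

lemma exp_sub_one_le_self_mul_exp {a : ℝ} (ha : 0 ≤ a) :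
    Real.exp a - 1 ≤ a * Real.exp a := by
  have h := Real.add_one_le_exp (-a)
  rw [Real.exp_neg] at h
  have hE := Real.exp_pos a
  have h2 : (-a + 1) * Real.exp a ≤ (Real.exp a)⁻¹ * Real.exp a :=
    mul_le_mul_of_nonneg_right h hE.le
  rw [inv_mul_cancel₀ hE.ne'] at h2
  nlinarith

lemma abs_deriv_sub_le_of_close {f g : ℝ → ℝ} {a c C : ℝ}
    (hf : HasDerivAt f a 0) (hg : HasDerivAt g c 0) (h0 : f 0 = g 0)
    (hcl : ∀ h : ℝ, |h| ≤ 1 → |f h - g h| ≤ C * |h|) : |a - c| ≤ C := by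
  have hd : HasDerivAt (fun h => f h - g h) (a - c) 0 := hf.sub hg
  rw [hasDerivAt_iff_tendsto_slope] at hd
  have h1 : ∀ᶠ h in 𝓝 (0:ℝ), |h| ≤ 1 := by
    filter_upwards [Metric.ball_mem_nhds (0:ℝ) one_pos] with h hh
    rw [Metric.mem_ball, Real.dist_eq, sub_zero] at hh
    exact hh.le
  have hev : ∀ᶠ h in 𝓝[≠] (0:ℝ), |slope (fun u => f u - g u) 0 h| ≤ C := by
    filter_upwards [self_mem_nhdsWithin, eventually_nhdsWithin_of_eventually_nhds h1]
      with h hne hle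
    have hne' : h ≠ 0 := hne
    have hz : f 0 - g 0 = 0 := by rw [h0]; ring
    have hs : slope (fun u => f u - g u) 0 h = (f h - g h) / h := by
      rw [slope_def_field, hz, sub_zero, sub_zero]
    rw [hs, abs_div]
    calc |f h - g h| / |h| ≤ (C * |h|) / |h| := by
          gcongr
          exact hcl h hle
      _ = C := mul_div_cancel_right₀ C (abs_ne_zero.mpr hne')
  exact le_of_tendsto hd.abs hev

lemma integrable_of_bounded_continuous {μ : Measure (EuclideanSpace ℝ (Fin d))}
    [IsFiniteMeasure μ] {f : EuclideanSpace ℝ (Fin d) → ℝ} (hf : Continuous f) (C : ℝ)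
    (hb : ∀ x, |f x| ≤ C) : Integrable f μ :=
  Integrable.mono' (integrable_const C) hf.aestronglyMeasurable
    (Filter.Eventually.of_forall fun x => by simpa [Real.norm_eq_abs] using hb x)

lemma hasDerivAt_integral_flow
    {X : ℝ → EuclideanSpace ℝ (Fin d) → EuclideanSpace ℝ (Fin d)}
    {μ : Measure (EuclideanSpace ℝ (Fin d))} [IsProbabilityMeasure μ]
    (ψ θ : EuclideanSpace ℝ (Fin d) → ℝ) (Cψ Cθ : ℝ)
    (hψc : Continuous ψ) (hψb : ∀ w, |ψ w| ≤ Cψ)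
    (hθc : Continuous θ) (hθb : ∀ w, |θ w| ≤ Cθ)
    (hXc : ∀ t, Continuous (fun x => X t x))
    (hder : ∀ y t, HasDerivAt (fun s => ψ (X s y)) (θ (X t y)) t) (t : ℝ) :
    HasDerivAt (fun s => ∫ y, ψ (X s y) ∂μ) (∫ y, θ (X t y) ∂μ) t := by
  have h := hasDerivAt_integral_of_dominated_loc_of_deriv_le (𝕜 := ℝ) (μ := μ) (s := Metric.ball t 1) (Metric.ball_mem_nhds t one_pos)
    (F := fun s y => ψ (X s y)) (F' := fun s y => θ (X s y)) (x₀ := t)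
    (bound := fun _ => Cθ)
    (Filter.Eventually.of_forall fun s => (hψc.comp (hXc s)).aestronglyMeasurable)
    (integrable_of_bounded_continuous (hψc.comp (hXc t)) Cψ (fun y => hψb _))
    (hθc.comp (hXc t)).aestronglyMeasurable
    (Filter.Eventually.of_forall fun y s _ => by
      simpa [Real.norm_eq_abs] using hθb (X s y))
    (integrable_const Cθ)
    (Filter.Eventually.of_forall fun y s _ => hder y s)
  exact h.2

section Bump
open ContinuousLinearMap

variable (φb : ContDiffBump (0 : EuclideanSpace ℝ (Fin d)))

lemma bump_smul_integrable (u : EuclideanSpace ℝ (Fin d) → ℝ) (C : ℝ)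
    (hu : Continuous u) (hC : ∀ x, |u x| ≤ C) :
    Integrable (fun z => φb.normed volume z • u z) volume := by
  refine Integrable.mono' ((φb.integrable_normed).mul_const C)
    ((φb.continuous_normed.smul hu).aestronglyMeasurable)
    (Filter.Eventually.of_forall fun z => ?_)
  rw [norm_smul, Real.norm_eq_abs, Real.norm_eq_abs, abs_of_nonneg (φb.nonneg_normed z)]
  exact mul_le_mul_of_nonneg_left (hC z) (φb.nonneg_normed z)

lemma bump_conv_value (u : EuclideanSpace ℝ (Fin d) → ℝ) (x : EuclideanSpace ℝ (Fin d)) :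
    convolution (φb.normed volume) u (lsmul ℝ ℝ) volume x
      = ∫ z, φb.normed volume z • u (x - z) := rfl

lemma bump_conv_bound (u : EuclideanSpace ℝ (Fin d) → ℝ) (C : ℝ)
    (hu : Continuous u) (hC : ∀ x, |u x| ≤ C) (x : EuclideanSpace ℝ (Fin d)) :
    |convolution (φb.normed volume) u (lsmul ℝ ℝ) volume x| ≤ C := by
  rw [bump_conv_value, ← Real.norm_eq_abs]
  have h := norm_integral_le_of_norm_le (μ := volume)
    (f := fun z => φb.normed volume z • u (x - z)) (g := fun z => φb.normed volume z * C)
    ((φb.integrable_normed).mul_const C)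
    (Filter.Eventually.of_forall (fun z => by
      rw [norm_smul, Real.norm_eq_abs, Real.norm_eq_abs, abs_of_nonneg (φb.nonneg_normed z)]
      exact mul_le_mul_of_nonneg_left (hC _) (φb.nonneg_normed z)))
  refine h.trans ?_
  rw [integral_mul_const, φb.integral_normed, one_mul]

lemma bump_conv_contDiff (u : EuclideanSpace ℝ (Fin d) → ℝ) (hu : Continuous u) :
    ContDiff ℝ 1 (convolution (φb.normed volume) u (lsmul ℝ ℝ) volume) :=
  HasCompactSupport.contDiff_convolution_left _ φb.hasCompactSupport_normed
    φb.contDiff_normed (hu.locallyIntegrable)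

lemma bump_conv_periodic (u : EuclideanSpace ℝ (Fin d) → ℝ) (huper : IsZdPeriodic d u) :
    IsZdPeriodic d (convolution (φb.normed volume) u (lsmul ℝ ℝ) volume) := by
  intro x k
  rw [bump_conv_value, bump_conv_value]
  refine integral_congr_ae (Filter.Eventually.of_forall fun z => ?_)
  show φb.normed volume z • u (x + intVec d k - z) = φb.normed volume z • u (x - z)
  have hx : x + intVec d k - z = (x - z) + intVec d k := by abel
  rw [hx, huper]

end Bump

section Key
open ContinuousLinearMap

lemma key_integral_zero
    (b : EuclideanSpace ℝ (Fin d) → EuclideanSpace ℝ (Fin d)) (hbc : Continuous b)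
    (X : ℝ → EuclideanSpace ℝ (Fin d) → EuclideanSpace ℝ (Fin d))
    (hX0 : ∀ x, X 0 x = x)
    (hX : ∀ x t, HasDerivAt (fun s => X s x) (b (X t x)) t)
    (μ : Measure (EuclideanSpace ℝ (Fin d))) [IsProbabilityMeasure μ]
    (hyp : ∀ ψ : EuclideanSpace ℝ (Fin d) → ℝ, ContDiff ℝ 1 ψ → IsZdPeriodic d ψ →
      ∫ y, (⟪b y, gradient ψ y⟫ : ℝ) ∂μ = 0)
    (Ψ Φ : EuclideanSpace ℝ (Fin d) → ℝ) (LΨ CΨ CΦ CP : ℝ)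
    (hLΨ0 : 0 ≤ LΨ) (hCP0 : 0 ≤ CP)
    (hΨlip : ∀ a c, |Ψ a - Ψ c| ≤ LΨ * dist a c)
    (hΨc : Continuous Ψ) (hΨb : ∀ w, |Ψ w| ≤ CΨ) (hΨper : IsZdPeriodic d Ψ)
    (hΦc : Continuous Φ) (hΦb : ∀ w, |Φ w| ≤ CΦ)
    (hXc : ∀ t, Continuous (fun x => X t x))
    (hpert : ∀ (z y : EuclideanSpace ℝ (Fin d)) (h : ℝ), |h| ≤ 1 →
      dist (X h y - z) (X h (y - z)) ≤ CP * (‖z‖ * |h|))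
    (hd : ∀ w h, HasDerivAt (fun u => Ψ (X u w)) (Φ (X h w)) h) :
    ∫ y, Φ y ∂μ = 0 := by
  have step1 : ∀ φb : ContDiffBump (0 : EuclideanSpace ℝ (Fin d)),
      |∫ y, convolution (φb.normed volume) Φ (lsmul ℝ ℝ) volume y ∂μ|
        ≤ (LΨ * CP) * φb.rOut := by
    intro φb
    set ρ := φb.normed volume with hρdef
    set χ := convolution ρ Ψ (lsmul ℝ ℝ) volume with hχdef
    set q := convolution ρ Φ (lsmul ℝ ℝ) volume with hqdef
    have hχ : ContDiff ℝ 1 χ := bump_conv_contDiff φb Ψ hΨc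
    have hχper : IsZdPeriodic d χ := bump_conv_periodic φb Ψ hΨper
    set C1 : ℝ := LΨ * CP * φb.rOut with hC1def
    have hC1nn : 0 ≤ C1 := mul_nonneg (mul_nonneg hLΨ0 hCP0) φb.rOut_pos.le
    have hptw : ∀ y, |fderiv ℝ χ y (b y) - q y| ≤ C1 := by
      intro y
      have hflow : HasDerivAt (fun s => X s y) (b (X 0 y)) 0 := hX y 0
      have hf₁ : HasDerivAt (fun h => χ (X h y)) (fderiv ℝ χ (X 0 y) (b (X 0 y))) 0 :=
        by have h := ((hχ.differentiable one_ne_zero) (X 0 y)).hasFDerivAt.comp_hasDerivAt 0 hflow; exact h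
      rw [hX0 y] at hf₁
      have hG := hasDerivAt_integral_of_dominated_loc_of_deriv_le (𝕜 := ℝ) (μ := volume)
        (s := Metric.ball (0:ℝ) 1) (Metric.ball_mem_nhds (0:ℝ) one_pos)
        (F := fun h z => ρ z • Ψ (X h (y - z))) (F' := fun h z => ρ z • Φ (X h (y - z)))
        (x₀ := 0) (bound := fun z => ρ z * CΦ)
        (Filter.Eventually.of_forall fun h =>
          (bump_smul_integrable φb _ CΨ
            (hΨc.comp ((hXc h).comp (continuous_const.sub continuous_id)))
            (fun z => hΨb _)).aestronglyMeasurable)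
        (bump_smul_integrable φb _ CΨ
          (hΨc.comp ((hXc 0).comp (continuous_const.sub continuous_id))) (fun z => hΨb _))
        (bump_smul_integrable φb _ CΦ
          (hΦc.comp ((hXc 0).comp (continuous_const.sub continuous_id)))
          (fun z => hΦb _)).aestronglyMeasurable
        (Filter.Eventually.of_forall fun z => fun h _ => by
          rw [norm_smul, Real.norm_eq_abs, Real.norm_eq_abs,
            abs_of_nonneg (φb.nonneg_normed z)]
          exact mul_le_mul_of_nonneg_left (hΦb _) (φb.nonneg_normed z))
        ((φb.integrable_normed).mul_const CΦ)
        (Filter.Eventually.of_forall fun z => fun h _ =>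
          HasDerivAt.const_smul (ρ z) (hd (y - z) h))
      have hG2 := hG.2
      simp only [hX0] at hG2
      have hqy : q y = ∫ z, ρ z • Φ (y - z) := bump_conv_value φb Φ y
      rw [← hqy] at hG2
      have hclose : ∀ h : ℝ, |h| ≤ 1 →
          |χ (X h y) - ∫ z, ρ z • Ψ (X h (y - z))| ≤ C1 * |h| := by
        intro h hh
        have hint1 : Integrable (fun z => ρ z • Ψ (X h y - z)) volume :=
          bump_smul_integrable φb _ CΨ
            (hΨc.comp (continuous_const.sub continuous_id)) (fun z => hΨb _)
        have hint2 : Integrable (fun z => ρ z • Ψ (X h (y - z))) volume :=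
          bump_smul_integrable φb _ CΨ
            (hΨc.comp ((hXc h).comp (continuous_const.sub continuous_id))) (fun z => hΨb _)
        have hptwz : ∀ z, ‖ρ z • Ψ (X h y - z) - ρ z • Ψ (X h (y - z))‖
            ≤ ρ z * (C1 * |h|) := by
          intro z
          rw [← smul_sub, norm_smul, Real.norm_eq_abs, Real.norm_eq_abs,
            abs_of_nonneg (φb.nonneg_normed z)]
          by_cases hz : ρ z = 0
          · have hz' : φb.normed volume z = 0 := hz
            rw [hz']
            simp only [zero_mul]
            exact mul_nonneg (φb.nonneg_normed z) (mul_nonneg hC1nn (abs_nonneg h))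
          · have hzmem : z ∈ Function.support ρ := Function.mem_support.mpr hz
            rw [hρdef, φb.support_normed_eq] at hzmem
            have hznorm : ‖z‖ ≤ φb.rOut := (mem_ball_zero_iff.mp hzmem).le
            refine mul_le_mul_of_nonneg_left ?_ (φb.nonneg_normed z)
            calc |Ψ (X h y - z) - Ψ (X h (y - z))|
                ≤ LΨ * dist (X h y - z) (X h (y - z)) := hΨlip _ _
              _ ≤ LΨ * (CP * (‖z‖ * |h|)) := by
                  have := hpert z y h hh
                  gcongr
              _ ≤ LΨ * (CP * (φb.rOut * |h|)) := by gcongr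
              _ = C1 * |h| := by rw [hC1def]; ring
        have hval : χ (X h y) = ∫ z, ρ z • Ψ (X h y - z) := bump_conv_value φb Ψ (X h y)
        rw [hval, ← integral_sub hint1 hint2, ← Real.norm_eq_abs]
        have hb1 := norm_integral_le_of_norm_le (μ := volume)
          (f := fun z => ρ z • Ψ (X h y - z) - ρ z • Ψ (X h (y - z)))
          (g := fun z => ρ z * (C1 * |h|)) ((φb.integrable_normed).mul_const _)
          (Filter.Eventually.of_forall hptwz)
        refine hb1.trans ?_
        rw [integral_mul_const, φb.integral_normed, one_mul]
      have h00 : χ (X 0 y) = ∫ z, ρ z • Ψ (X 0 (y - z)) := by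
        simp only [hX0]
        exact bump_conv_value φb Ψ y
      exact abs_deriv_sub_le_of_close hf₁ hG2 h00 hclose
    have hq_cont : Continuous q := (bump_conv_contDiff φb Φ hΦc).continuous
    have hq_bd : ∀ y, |q y| ≤ CΦ := bump_conv_bound φb Φ CΦ hΦc hΦb
    have hq_int : Integrable q μ := integrable_of_bounded_continuous hq_cont CΦ hq_bd
    have hF_cont : Continuous (fun y => fderiv ℝ χ y (b y)) :=
      (hχ.continuous_fderiv one_ne_zero).clm_apply hbc
    have hF_bd : ∀ y, |fderiv ℝ χ y (b y)| ≤ CΦ + C1 := by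
      intro y
      have h1 := hptw y
      have h2 := hq_bd y
      have h3 := abs_sub_abs_le_abs_sub (fderiv ℝ χ y (b y)) (q y)
      linarith
    have hF_int : Integrable (fun y => fderiv ℝ χ y (b y)) μ :=
      integrable_of_bounded_continuous hF_cont _ hF_bd
    have hzero : ∫ y, fderiv ℝ χ y (b y) ∂μ = 0 := by
      rw [← hyp χ hχ hχper]
      exact integral_congr_ae (Filter.Eventually.of_forall fun y =>
        (inner_gradient_eq χ y (b y)).symm)
    have habs : |∫ y, q y ∂μ| = |∫ y, (q y - fderiv ℝ χ y (b y)) ∂μ| := by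
      rw [integral_sub hq_int hF_int, hzero, sub_zero]
    rw [habs, ← Real.norm_eq_abs]
    have hb2 := norm_integral_le_of_norm_le (μ := μ)
      (f := fun y => q y - fderiv ℝ χ y (b y)) (g := fun _ => C1) (integrable_const C1)
      (Filter.Eventually.of_forall fun y => by
        rw [Real.norm_eq_abs, abs_sub_comm]
        exact hptw y)
    refine hb2.trans ?_
    rw [integral_const, probReal_univ]
    simp [hC1def, mul_assoc]
  -- Step 2 : take a sequence of bumps with radius → 0
  have hlt : ∀ n : ℕ, (1:ℝ) / (2 * ((n:ℝ) + 1)) < 1 / ((n:ℝ) + 1) := by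
    intro n
    apply one_div_lt_one_div_of_lt (by positivity)
    have : (0:ℝ) < (n:ℝ) + 1 := by positivity
    linarith
  set φn : ℕ → ContDiffBump (0 : EuclideanSpace ℝ (Fin d)) := fun n =>
    ⟨1 / (2 * ((n:ℝ) + 1)), 1 / ((n:ℝ) + 1), by positivity, hlt n⟩ with hφndef
  have hr : ∀ n, (φn n).rOut = 1 / ((n:ℝ) + 1) := fun n => rfl
  have hrOut_to0 : Tendsto (fun n => (φn n).rOut) atTop (𝓝 0) := by
    simp only [hr]
    exact tendsto_one_div_add_atTop_nhds_zero_nat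
  have hconv_tendsto : ∀ x : EuclideanSpace ℝ (Fin d),
      Tendsto (fun n => convolution ((φn n).normed volume) Φ (lsmul ℝ ℝ) volume x)
        atTop (𝓝 (Φ x)) := fun x =>
    ContDiffBump.convolution_tendsto_right_of_continuous (μ := volume) hrOut_to0 hΦc x
  have hint_tendsto : Tendsto
      (fun n => ∫ y, convolution ((φn n).normed volume) Φ (lsmul ℝ ℝ) volume y ∂μ)
      atTop (𝓝 (∫ y, Φ y ∂μ)) := by
    apply tendsto_integral_filter_of_dominated_convergence (fun _ => CΦ)
    · exact Filter.Eventually.of_forall fun n =>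
        ((bump_conv_contDiff (φn n) Φ hΦc).continuous).aestronglyMeasurable
    · exact Filter.Eventually.of_forall fun n => Filter.Eventually.of_forall fun y => by
        rw [Real.norm_eq_abs]
        exact bump_conv_bound (φn n) Φ CΦ hΦc hΦb y
    · exact integrable_const CΦ
    · exact Filter.Eventually.of_forall fun y => hconv_tendsto y
  have hzero_lim : Tendsto
      (fun n => ∫ y, convolution ((φn n).normed volume) Φ (lsmul ℝ ℝ) volume y ∂μ)
      atTop (𝓝 0) := by
    have hb3 : ∀ n : ℕ, ‖∫ y, convolution ((φn n).normed volume) Φ (lsmul ℝ ℝ) volume y ∂μ‖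
        ≤ (LΨ * CP) * (φn n).rOut := fun n => by
      rw [Real.norm_eq_abs]
      exact step1 (φn n)
    exact squeeze_zero_norm hb3 (by simpa using hrOut_to0.const_mul (LΨ * CP))
  exact tendsto_nhds_unique hint_tendsto hzero_lim

end Key

end Stmt7

open Stmt7 ContinuousLinearMap

/-- Liouville's theorem on the torus: a probability measure `μ` on the torus is invariant
for the flow associated with `b` if and only if `∫ b·∇ψ dμ = 0` for every `C¹`
`ℤ^d`-periodic function `ψ`. -/
theorem stmt7 (d : ℕ) (b : EuclideanSpace ℝ (Fin d) → EuclideanSpace ℝ (Fin d))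
    (hb : ContDiff ℝ 1 b) (hbper : IsZdPeriodic d b)
    (X : ℝ → EuclideanSpace ℝ (Fin d) → EuclideanSpace ℝ (Fin d))
    (hX0 : ∀ x, X 0 x = x)
    (hX : ∀ x t, HasDerivAt (fun s => X s x) (b (X t x)) t)
    (μ : Measure (EuclideanSpace ℝ (Fin d))) (hμ : IsTorusMeasure μ) :
    IsInvariantMeasure X μ ↔
      ∀ ψ : EuclideanSpace ℝ (Fin d) → ℝ, ContDiff ℝ 1 ψ → IsZdPeriodic d ψ →
        ∫ y, (⟪b y, gradient ψ y⟫ : ℝ) ∂μ = 0 := by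
    classical
  haveI : IsProbabilityMeasure μ := hμ.1
  obtain ⟨B, hB0, hBb⟩ := exists_bound_of_periodic b hb.continuous hbper
  obtain ⟨K, hK1, hKlip⟩ := lipschitz_of_contDiff_periodic hb hbper
  have hKpos : (0:ℝ) < K := lt_of_lt_of_le one_pos hK1
  have hKne : (K:ℝ) ≠ 0 := ne_of_gt hKpos
  -- the reversed flow
  have hbneg : LipschitzWith K (fun w => -(b w)) := LipschitzWith.of_dist_le_mul fun x y => by
    rw [dist_neg_neg]
    exact hKlip.dist_le_mul x y
  have hXn0 : ∀ x, (fun (s : ℝ) x => X (-s) x) 0 x = x := fun x => by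
    show X (-0) x = x
    rw [neg_zero]
    exact hX0 x
  have hXn' : ∀ x t, HasDerivAt (fun s => (fun (s : ℝ) x => X (-s) x) s x)
      ((fun w => -(b w)) ((fun (s : ℝ) x => X (-s) x) t x)) t := by
    intro x t
    have h1 := (hX x (-t)).scomp t (hasDerivAt_neg t)
    show HasDerivAt (fun s => X (-s) x) (-(b (X (-t) x))) t
    rw [neg_one_smul] at h1
    exact h1
  -- flow Lipschitz estimate in x, for all times
  have hXdist : ∀ (t : ℝ) x y, dist (X t x) (X t y) ≤ dist x y * Real.exp (K * |t|) := by
    intro t x y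
    rcases le_or_gt 0 t with ht | ht
    · rw [abs_of_nonneg ht]
      exact flow_dist_nonneg hKlip hX0 hX x y ht
    · have h2 := flow_dist_nonneg (X := fun (s : ℝ) x => X (-s) x) hbneg hXn0 hXn' x y
        (t := -t) (by linarith)
      rw [abs_of_neg ht]
      simpa [neg_neg] using h2
  have hXc : ∀ t, Continuous (fun x => X t x) := by
    intro t
    have hl : LipschitzWith (Real.toNNReal (Real.exp (K * |t|))) (fun x => X t x) := by
      apply LipschitzWith.of_dist_le_mul
      intro x y
      rw [Real.coe_toNNReal _ (Real.exp_pos _).le, mul_comm]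
      exact hXdist t x y
    exact hl.continuous
  -- perturbation estimate
  have hexp : ∀ u : ℝ, 0 ≤ u → u ≤ 1 → Real.exp ((K:ℝ) * u) - 1 ≤ ((K:ℝ) * Real.exp K) * u := by
    intro u hu hu1
    have h1 := exp_sub_one_le_self_mul_exp (mul_nonneg hKpos.le hu)
    have h2 : Real.exp ((K:ℝ) * u) ≤ Real.exp K := Real.exp_le_exp.mpr (by nlinarith)
    have h3 : (K:ℝ) * u * Real.exp ((K:ℝ) * u) ≤ (K:ℝ) * u * Real.exp K :=
      mul_le_mul_of_nonneg_left h2 (mul_nonneg hKpos.le hu)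
    nlinarith [Real.exp_pos ((K:ℝ) * u)]
  have hpert : ∀ (z y : EuclideanSpace ℝ (Fin d)) (h : ℝ), |h| ≤ 1 →
      dist (X h y - z) (X h (y - z)) ≤ ((K:ℝ) * Real.exp K) * (‖z‖ * |h|) := by
    intro z y h hh
    rcases le_or_gt 0 h with hpos | hneg
    · have h1 := flow_pert_nonneg hKlip hKne hX0 hX y z (t := h) hpos
      have h2 := hexp h hpos (by rwa [abs_of_nonneg hpos] at hh)
      calc dist (X h y - z) (X h (y - z)) ≤ ‖z‖ * (Real.exp (K * h) - 1) := h1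
        _ ≤ ‖z‖ * (((K:ℝ) * Real.exp K) * h) := by
            exact mul_le_mul_of_nonneg_left h2 (norm_nonneg z)
        _ = ((K:ℝ) * Real.exp K) * (‖z‖ * |h|) := by rw [abs_of_nonneg hpos]; ring
    · have h1 := flow_pert_nonneg (X := fun (s : ℝ) x => X (-s) x) hbneg hKne hXn0 hXn'
        y z (t := -h) (by linarith)
      have hmem : (-h) ≤ 1 := by rwa [abs_of_neg hneg] at hh
      have h2 := hexp (-h) (by linarith) hmem
      have h1' : dist (X h y - z) (X h (y - z)) ≤ ‖z‖ * (Real.exp (K * (-h)) - 1) := by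
        simpa [neg_neg] using h1
      calc dist (X h y - z) (X h (y - z)) ≤ ‖z‖ * (Real.exp (K * (-h)) - 1) := h1'
        _ ≤ ‖z‖ * (((K:ℝ) * Real.exp K) * (-h)) := by
            exact mul_le_mul_of_nonneg_left h2 (norm_nonneg z)
        _ = ((K:ℝ) * Real.exp K) * (‖z‖ * |h|) := by rw [abs_of_neg hneg]; ring
  -- group law
  have hgroup : ∀ (s t : ℝ) x, X (t + s) x = X t (X s x) := by
    intro s t x
    apply flow_unique hKlip (f := fun u => X (u + s) x) (g := fun u => X u (X s x))
    · intro u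
      have h1 := (hX x (u + s)).scomp u ((hasDerivAt_id u).add_const s)
      rw [one_smul] at h1
      exact h1
    · intro u
      exact hX (X s x) u
    · show X (0 + s) x = X 0 (X s x)
      rw [zero_add, hX0]
  -- flow commutes with integer translations
  have hXper : ∀ (t : ℝ) x k, X t (x + intVec d k) = X t x + intVec d k := by
    intro t x k
    apply flow_unique hKlip (f := fun u => X u (x + intVec d k))
      (g := fun u => X u x + intVec d k)
    · intro u
      exact hX (x + intVec d k) u
    · intro u
      have h1 := (hX x u).add_const (intVec d k)
      have h2 : b (X u x) = b (X u x + intVec d k) := (hbper (X u x) k).symm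
      rw [h2] at h1
      exact h1
    · show X 0 (x + intVec d k) = X 0 x + intVec d k
      rw [hX0, hX0]
  constructor
  · -- invariance implies the integral identity
    intro hinv ψ hψ hψper
    obtain ⟨Cψ, hCψ0, hCψ⟩ := exists_bound_of_periodic ψ hψ.continuous hψper
    obtain ⟨Cf, hCf0, hCf⟩ := exists_bound_of_periodic (fderiv ℝ ψ)
      (hψ.continuous_fderiv one_ne_zero) (isZdPeriodic_fderiv (hψ.differentiable one_ne_zero) hψper)
    have hθc : Continuous (fun w => fderiv ℝ ψ w (b w)) :=
      (hψ.continuous_fderiv one_ne_zero).clm_apply hb.continuous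
    have hθb : ∀ w, |fderiv ℝ ψ w (b w)| ≤ Cf * B := by
      intro w
      calc |fderiv ℝ ψ w (b w)| = ‖fderiv ℝ ψ w (b w)‖ := (Real.norm_eq_abs _).symm
        _ ≤ ‖fderiv ℝ ψ w‖ * ‖b w‖ := (fderiv ℝ ψ w).le_opNorm (b w)
        _ ≤ Cf * B := mul_le_mul (hCf w) (hBb w) (norm_nonneg _) hCf0
    have hder : ∀ y t, HasDerivAt (fun s => ψ (X s y)) (fderiv ℝ ψ (X t y) (b (X t y))) t :=
      fun y t => ((hψ.differentiable one_ne_zero (X t y)).hasFDerivAt).comp_hasDerivAt t (hX y t)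
    have hg := hasDerivAt_integral_flow (μ := μ) ψ (fun w => fderiv ℝ ψ w (b w)) Cψ (Cf * B)
      hψ.continuous (fun w => by rw [← Real.norm_eq_abs]; exact hCψ w) hθc hθb hXc hder 0
    have hconst : (fun s => ∫ y, ψ (X s y) ∂μ) = fun _ => ∫ y, ψ y ∂μ :=
      funext fun s => hinv s ψ hψ.continuous hψper
    rw [hconst] at hg
    have hzero := hg.unique (hasDerivAt_const 0 _)
    have heq : (∫ y, (⟪b y, gradient ψ y⟫ : ℝ) ∂μ)
        = ∫ y, fderiv ℝ ψ (X 0 y) (b (X 0 y)) ∂μ := by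
      refine integral_congr_ae (Filter.Eventually.of_forall fun y => ?_)
      show (⟪b y, gradient ψ y⟫ : ℝ) = fderiv ℝ ψ (X 0 y) (b (X 0 y))
      rw [hX0 y]
      exact inner_gradient_eq ψ y (b y)
    rw [heq, hzero]
  · -- the integral identity implies invariance
    intro hyp t φ hφc hφper
    -- Step A : invariance for C¹ periodic test functions
    have stepA : ∀ ψ : EuclideanSpace ℝ (Fin d) → ℝ, ContDiff ℝ 1 ψ → IsZdPeriodic d ψ →
        ∀ s : ℝ, ∫ y, ψ (X s y) ∂μ = ∫ y, ψ y ∂μ := by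
      intro ψ hψ hψper
      obtain ⟨Cψ, hCψ0, hCψ⟩ := exists_bound_of_periodic ψ hψ.continuous hψper
      obtain ⟨Cf, hCf0, hCf⟩ := exists_bound_of_periodic (fderiv ℝ ψ)
        (hψ.continuous_fderiv one_ne_zero) (isZdPeriodic_fderiv (hψ.differentiable one_ne_zero) hψper)
      obtain ⟨Lψ, hLψ1, hLψ⟩ := lipschitz_of_contDiff_periodic hψ hψper
      have hθc : Continuous (fun w => fderiv ℝ ψ w (b w)) :=
        (hψ.continuous_fderiv one_ne_zero).clm_apply hb.continuous
      have hθb : ∀ w, |fderiv ℝ ψ w (b w)| ≤ Cf * B := by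
        intro w
        calc |fderiv ℝ ψ w (b w)| = ‖fderiv ℝ ψ w (b w)‖ := (Real.norm_eq_abs _).symm
          _ ≤ ‖fderiv ℝ ψ w‖ * ‖b w‖ := (fderiv ℝ ψ w).le_opNorm (b w)
          _ ≤ Cf * B := mul_le_mul (hCf w) (hBb w) (norm_nonneg _) hCf0
      have hder : ∀ y u, HasDerivAt (fun s => ψ (X s y)) (fderiv ℝ ψ (X u y) (b (X u y))) u :=
        fun y u => ((hψ.differentiable one_ne_zero (X u y)).hasFDerivAt).comp_hasDerivAt u (hX y u)
      -- derivative of s ↦ ∫ ψ(X s y) dμ vanishes everywhere, via the key lemma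
      have hderiv0 : ∀ s : ℝ, (∫ y, fderiv ℝ ψ (X s y) (b (X s y)) ∂μ) = 0 := by
        intro s
        have hcompfun : ∀ (w : EuclideanSpace ℝ (Fin d)) (u : ℝ),
            X s (X u w) = X (s + u) w := fun w u => (hgroup u s w).symm
        apply key_integral_zero b hb.continuous X hX0 hX μ hyp
          (Ψ := fun w => ψ (X s w)) (Φ := fun w => fderiv ℝ ψ (X s w) (b (X s w)))
          (LΨ := (Lψ : ℝ) * Real.exp (K * |s|)) (CΨ := Cψ) (CΦ := Cf * B)
          (CP := (K:ℝ) * Real.exp K)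
        · positivity
        · positivity
        · intro a c
          calc |ψ (X s a) - ψ (X s c)| ≤ (Lψ:ℝ) * dist (X s a) (X s c) := by
                have := hLψ.dist_le_mul (X s a) (X s c)
                rwa [Real.dist_eq] at this
            _ ≤ (Lψ:ℝ) * (dist a c * Real.exp (K * |s|)) :=
                mul_le_mul_of_nonneg_left (hXdist s a c) Lψ.coe_nonneg
            _ = ((Lψ:ℝ) * Real.exp (K * |s|)) * dist a c := by ring
        · exact hψ.continuous.comp (hXc s)
        · intro w
          rw [← Real.norm_eq_abs]
          exact hCψ _
        · intro x k
          show ψ (X s (x + intVec d k)) = ψ (X s x)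
          rw [hXper s x k]
          exact hψper _ k
        · exact hθc.comp (hXc s)
        · intro w
          exact hθb _
        · exact hXc
        · exact hpert
        · intro w h
          have hfun : (fun u => ψ (X s (X u w))) = fun u => ψ (X (s + u) w) :=
            funext fun u => by rw [hcompfun w u]
          have hin : HasDerivAt (fun u => X (s + u) w) (b (X (s + h) w)) h := by
            have h1 := (hX w (s + h)).scomp h ((hasDerivAt_id h).const_add s)
            rw [one_smul] at h1
            exact h1
          have h2 : HasDerivAt (fun u => ψ (X (s + u) w))
              (fderiv ℝ ψ (X (s + h) w) (b (X (s + h) w))) h :=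
            ((hψ.differentiable one_ne_zero (X (s + h) w)).hasFDerivAt).comp_hasDerivAt h hin
          rw [← hfun] at h2
          have h3 : X (s + h) w = X s (X h w) := hgroup h s w
          rw [h3] at h2
          exact h2
      have hdiff : ∀ s : ℝ, HasDerivAt (fun s => ∫ y, ψ (X s y) ∂μ) 0 s := by
        intro s
        have h1 := hasDerivAt_integral_flow (μ := μ) ψ (fun w => fderiv ℝ ψ w (b w)) Cψ (Cf * B)
          hψ.continuous (fun w => by rw [← Real.norm_eq_abs]; exact hCψ w) hθc hθb hXc hder s
        rwa [hderiv0 s] at h1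
      intro s
      have hconst := is_const_of_deriv_eq_zero (𝕜 := ℝ)
        (fun u => (hdiff u).differentiableAt) (fun u => (hdiff u).deriv) s 0
      rw [hconst]
      refine integral_congr_ae (Filter.Eventually.of_forall fun y => ?_)
      show ψ (X 0 y) = ψ y
      rw [hX0 y]
    -- Step B : approximation of continuous periodic functions
    obtain ⟨Cφ, hCφ0, hCφ⟩ := exists_bound_of_periodic φ hφc hφper
    have hφb : ∀ w, |φ w| ≤ Cφ := fun w => by rw [← Real.norm_eq_abs]; exact hCφ w
    have hlt : ∀ n : ℕ, (1:ℝ) / (2 * ((n:ℝ) + 1)) < 1 / ((n:ℝ) + 1) := by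
      intro n
      apply one_div_lt_one_div_of_lt (by positivity)
      have : (0:ℝ) < (n:ℝ) + 1 := by positivity
      linarith
    set φn : ℕ → ContDiffBump (0 : EuclideanSpace ℝ (Fin d)) := fun n =>
      ⟨1 / (2 * ((n:ℝ) + 1)), 1 / ((n:ℝ) + 1), by positivity, hlt n⟩ with hφndef
    have hrOut_to0 : Tendsto (fun n => (φn n).rOut) atTop (𝓝 0) := by
      have hr : ∀ n, (φn n).rOut = 1 / ((n:ℝ) + 1) := fun n => rfl
      simp only [hr]
      exact tendsto_one_div_add_atTop_nhds_zero_nat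
    have hconv_tendsto : ∀ x : EuclideanSpace ℝ (Fin d),
        Tendsto (fun n => convolution ((φn n).normed volume) φ (lsmul ℝ ℝ) volume x)
          atTop (𝓝 (φ x)) := fun x =>
      ContDiffBump.convolution_tendsto_right_of_continuous (μ := volume) hrOut_to0 hφc x
    have heqn : ∀ n : ℕ,
        ∫ y, convolution ((φn n).normed volume) φ (lsmul ℝ ℝ) volume (X t y) ∂μ
          = ∫ y, convolution ((φn n).normed volume) φ (lsmul ℝ ℝ) volume y ∂μ := fun n =>
      stepA _ (bump_conv_contDiff (φn n) φ hφc) (bump_conv_periodic (φn n) φ hφper) t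
    have h1 : Tendsto
        (fun n => ∫ y, convolution ((φn n).normed volume) φ (lsmul ℝ ℝ) volume (X t y) ∂μ)
        atTop (𝓝 (∫ y, φ (X t y) ∂μ)) := by
      apply tendsto_integral_filter_of_dominated_convergence (fun _ => Cφ)
      · exact Filter.Eventually.of_forall fun n =>
          (((bump_conv_contDiff (φn n) φ hφc).continuous).comp (hXc t)).aestronglyMeasurable
      · exact Filter.Eventually.of_forall fun n => Filter.Eventually.of_forall fun y => by
          rw [Real.norm_eq_abs]
          exact bump_conv_bound (φn n) φ Cφ hφc hφb (X t y)
      · exact integrable_const Cφ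
      · exact Filter.Eventually.of_forall fun y => hconv_tendsto (X t y)
    have h2 : Tendsto
        (fun n => ∫ y, convolution ((φn n).normed volume) φ (lsmul ℝ ℝ) volume y ∂μ)
        atTop (𝓝 (∫ y, φ y ∂μ)) := by
      apply tendsto_integral_filter_of_dominated_convergence (fun _ => Cφ)
      · exact Filter.Eventually.of_forall fun n =>
          ((bump_conv_contDiff (φn n) φ hφc).continuous).aestronglyMeasurable
      · exact Filter.Eventually.of_forall fun n => Filter.Eventually.of_forall fun y => by
          rw [Real.norm_eq_abs]
          exact bump_conv_bound (φn n) φ Cφ hφc hφb y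
      · exact integrable_const Cφ
      · exact Filter.Eventually.of_forall fun y => hconv_tendsto y
    have h1' : Tendsto
        (fun n => ∫ y, convolution ((φn n).normed volume) φ (lsmul ℝ ℝ) volume y ∂μ)
        atTop (𝓝 (∫ y, φ (X t y) ∂μ)) := by
      have := funext heqn
      rwa [this] at h1
    exact tendsto_nhds_unique h1' h2
end
end

section
/- Let b : ℝ^d → ℝ^d be a C¹ ℤ^d-periodic vector field and μ a Borel probability measure on the torus Y_d. Then the condition '∫_{Y_d} b·∇ψ dμ = 0 for every C¹ ℤ^d-periodic ψ' is equivalent to the divergence–curl identity: for every C¹ function ψ : ℝ^d → ℝ whose gradient ∇ψ is ℤ^d-periodic and continuous, ∫_{Y_d} b(y)·∇ψ(y) dμ(y) = (∫_{Y_d} b dμ) · (∫_{Y_d} ∇ψ(y) dy), where the last integral is over the unit cube with Lebesgue measure. -/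
open MeasureTheory Filter Topology
open scoped RealInnerProductSpace

noncomputable section

namespace Stmt9Aux

variable {d : ℕ}

/-- The closed unit cube. -/
def cc (d : ℕ) : Set (EuclideanSpace ℝ (Fin d)) := {x | ∀ i, x i ∈ Set.Icc (0 : ℝ) 1}

lemma isCompact_cc : IsCompact (cc d) := by
  have h : cc d = (PiLp.continuousLinearEquiv 2 ℝ (fun _ : Fin d => ℝ)).toHomeomorph ⁻¹'
      (Set.univ.pi fun _ => Set.Icc (0 : ℝ) 1) := by
    ext x
    simp only [cc, Set.mem_setOf_eq, Set.mem_preimage, Set.mem_univ_pi]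
    rfl
  rw [h, Homeomorph.isCompact_preimage]
  exact isCompact_univ_pi fun _ => isCompact_Icc

lemma unitCube_subset_cc : unitCube d ⊆ cc d := fun x hx i => Set.Ico_subset_Icc_self (hx i)

lemma mem_cc_shift (x : EuclideanSpace ℝ (Fin d)) :
    x + intVec d (fun i => -⌊x i⌋) ∈ cc d := by
  intro i
  have : (x + intVec d (fun i => -⌊x i⌋)) i = Int.fract (x i) := by
    rw [PiLp.add_apply]
    show x i + ((-⌊x i⌋ : ℤ) : ℝ) = Int.fract (x i)
    rw [Int.fract]; push_cast; ring
  rw [this]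
  exact ⟨Int.fract_nonneg _, (Int.fract_lt_one _).le⟩

/-- A continuous `ℤ^d`-periodic function is bounded. -/
lemma bounded_of_periodic {α : Type*} [NormedAddCommGroup α]
    {f : EuclideanSpace ℝ (Fin d) → α} (hf : Continuous f) (hper : IsZdPeriodic d f) :
    ∃ C, ∀ x, ‖f x‖ ≤ C := by
  obtain ⟨C, hC⟩ := isCompact_cc.exists_bound_of_continuousOn hf.continuousOn
  exact ⟨C, fun x => by
    have := hC _ (mem_cc_shift x)
    rwa [hper x _] at this⟩

lemma integrable_of_periodic {α : Type*} [NormedAddCommGroup α]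
    {f : EuclideanSpace ℝ (Fin d) → α}
    (μ : Measure (EuclideanSpace ℝ (Fin d))) [IsFiniteMeasure μ]
    (hf : Continuous f) (hper : IsZdPeriodic d f) : Integrable f μ := by
  obtain ⟨C, hC⟩ := bounded_of_periodic hf hper
  exact Integrable.mono' (integrable_const C) hf.aestronglyMeasurable (ae_of_all _ hC)

lemma integrableOn_cube {α : Type*} [NormedAddCommGroup α]
    {f : EuclideanSpace ℝ (Fin d) → α} (hf : Continuous f) :
    IntegrableOn f (unitCube d) := by
  exact (hf.continuousOn.integrableOn_compact isCompact_cc).mono_set unitCube_subset_cc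

end Stmt9Aux

namespace Stmt9Aux

variable {d : ℕ}

local notation "Eu" => EuclideanSpace ℝ (Fin d)

lemma fderiv_shift {ψ : Eu → ℝ} (hψ : Differentiable ℝ ψ) (c x : Eu) :
    fderiv ℝ (fun y => ψ (y + c)) x = fderiv ℝ ψ (x + c) := by
  have h := ((hψ (x + c)).hasFDerivAt).comp x ((hasFDerivAt_id x).add_const c)
  simpa [Function.comp_def] using h.fderiv

/-- The gradient of a periodic `C¹` function is periodic. -/
lemma grad_periodic_of_periodic {ψ : Eu → ℝ} (hψ : Differentiable ℝ ψ)
    (hper : IsZdPeriodic d ψ) : IsZdPeriodic d (fun y => gradient ψ y) := by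
  intro x k
  have h1 : (fun y => ψ (y + intVec d k)) = ψ := funext fun y => hper y k
  have h2 : fderiv ℝ ψ (x + intVec d k) = fderiv ℝ ψ x := by
    rw [← fderiv_shift hψ (intVec d k) x, h1]
  simp only [gradient, h2]

/-- If the gradient is periodic then so is the Fréchet derivative. -/
lemma fderiv_periodic_of_grad_periodic {ψ : Eu → ℝ}
    (hgrad : IsZdPeriodic d (fun y => gradient ψ y)) (x : Eu) (k : Fin d → ℤ) :
    fderiv ℝ ψ (x + intVec d k) = fderiv ℝ ψ x := by
  have := hgrad x k
  simp only [gradient] at this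
  have := congrArg (InnerProductSpace.toDual ℝ Eu) this
  simpa using this

/-- If the gradient of `ψ` is periodic, then `ψ (x+k) - ψ x` does not depend on `x`. -/
lemma shift_const {ψ : Eu → ℝ} (hψ : Differentiable ℝ ψ)
    (hgrad : IsZdPeriodic d (fun y => gradient ψ y)) (k : Fin d → ℤ) (x : Eu) :
    ψ (x + intVec d k) = ψ x + (ψ (intVec d k) - ψ 0) := by
  set g : Eu → ℝ := fun y => ψ (y + intVec d k) - ψ y with hg
  have hgd : Differentiable ℝ g :=
    (hψ.comp ((differentiable_id).add_const _)).sub hψ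
  have hg0 : ∀ y, fderiv ℝ g y = 0 := by
    intro y
    rw [hg]
    have ha : DifferentiableAt ℝ (fun y : Eu => ψ (y + intVec d k)) y :=
      DifferentiableAt.comp y (hψ _) (differentiableAt_id.add_const _)
    rw [fderiv_fun_sub ha (hψ y),
      fderiv_shift hψ, fderiv_periodic_of_grad_periodic hgrad, sub_self]
  have := is_const_of_fderiv_eq_zero hgd hg0 x 0
  simp only [hg, zero_add] at this
  linarith

lemma hasGradientAt_inner_const (v x : Eu) :
    HasGradientAt (fun y : Eu => (⟪y, v⟫ : ℝ)) v x := by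
  have h : (fun y : Eu => (⟪y, v⟫ : ℝ)) = fun y => innerSL ℝ v y := by
    funext y; exact real_inner_comm _ _
  rw [hasGradientAt_iff_hasFDerivAt, h]
  have hd : InnerProductSpace.toDual ℝ Eu v = innerSL ℝ v := by
    ext y; simp [InnerProductSpace.toDual_apply_apply]
  rw [hd]
  exact (innerSL ℝ v).hasFDerivAt

lemma gradient_sub_inner {ψ : Eu → ℝ} (hψ : Differentiable ℝ ψ) (v x : Eu) :
    HasGradientAt (fun y : Eu => ψ y - (⟪y, v⟫ : ℝ)) (gradient ψ x - v) x := by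
  have h1 : HasGradientAt ψ (gradient ψ x) x := (hψ x).hasGradientAt
  have h2 := hasGradientAt_inner_const v x
  rw [hasGradientAt_iff_hasFDerivAt] at h1 h2 ⊢
  rw [map_sub]
  exact h1.sub h2

lemma continuous_gradient {ψ : Eu → ℝ} (hψ : ContDiff ℝ 1 ψ) :
    Continuous (fun y => gradient ψ y) := by
  simp only [gradient]
  exact (LinearIsometryEquiv.continuous _).comp (hψ.continuous_fderiv one_ne_zero)

end Stmt9Aux

namespace Stmt9Aux

variable {d : ℕ}

local notation "Eu" => EuclideanSpace ℝ (Fin d)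

lemma divergence_core {n : ℕ} (Q : (Fin (n+1) → ℝ) → ℝ)
    (DQ : (Fin (n+1) → ℝ) → (Fin (n+1) → ℝ) →L[ℝ] ℝ) (i : Fin (n+1))
    (hQc : Continuous Q) (hDQ : ∀ x, HasFDerivAt Q (DQ x) x)
    (hDQc : Continuous fun x => DQ x (Pi.single i 1))
    (hQper : ∀ x, Q (x + Pi.single i 1) = Q x) :
    ∫ x in Set.Icc (0 : Fin (n+1) → ℝ) 1, DQ x (Pi.single i 1) = 0 := by
  classical
  have hle : (0 : Fin (n+1) → ℝ) ≤ 1 := fun _ => zero_le_one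
  have hsum : (fun x => ∑ j, (if j = i then DQ x else 0) (Pi.single j (1:ℝ))) =
      fun x => DQ x (Pi.single i 1) := by
    funext x
    rw [Finset.sum_eq_single i]
    · simp
    · intro j _ hj; simp [hj]
    · simp
  have key := MeasureTheory.integral_divergence_of_hasFDerivAt_off_countable'
    (0 : Fin (n+1) → ℝ) 1 hle
    (fun j x => if j = i then Q x else 0)
    (fun j x => if j = i then DQ x else 0)
    ∅ Set.countable_empty
    (fun j => by by_cases h : j = i <;> simp [h, hQc.continuousOn, continuousOn_const])
    (fun x _ j => by
      by_cases h : j = i <;> simp only [h, if_true, if_false]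
      · exact hDQ x
      · exact hasFDerivAt_const 0 x)
    (by rw [hsum]; exact hDQc.continuousOn.integrableOn_compact isCompact_Icc)
  rw [setIntegral_congr_fun measurableSet_Icc (fun x _ => congrFun hsum x)] at key
  rw [key]
  apply Finset.sum_eq_zero
  intro j _
  by_cases h : j = i
  · subst h
    have heq : ∀ x : Fin n → ℝ, Q (j.insertNth ((1 : Fin (n+1) → ℝ) j) x)
        = Q (j.insertNth ((0 : Fin (n+1) → ℝ) j) x) := by
      intro x
      have hsplit : (j.insertNth (1:ℝ) x : Fin (n+1) → ℝ) =
          (j.insertNth (0:ℝ) x : Fin (n+1) → ℝ) + Pi.single j (1:ℝ) := by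
        funext m
        refine Fin.succAboveCases j ?_ ?_ m
        · simp
        · intro l; simp [Fin.succAbove_ne j l, Pi.single_eq_of_ne (Fin.succAbove_ne j l)]
      simp only [Pi.one_apply, Pi.zero_apply, hsplit, hQper]
    simp only [if_true, Pi.one_apply, Pi.zero_apply] at *
    rw [setIntegral_congr_fun measurableSet_Icc (fun x _ => heq x), sub_self]
  · simp [h]

lemma fderiv_apply_eq_inner {ψ : Eu → ℝ} (y v : Eu) :
    fderiv ℝ ψ y v = (⟪gradient ψ y, v⟫ : ℝ) := by
  rw [gradient]
  rw [← InnerProductSpace.toDual_apply_apply]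
  rw [LinearIsometryEquiv.apply_symm_apply]

/-- Key lemma: the integral over the unit cube of the gradient of a periodic `C¹`
function vanishes. -/
lemma integral_gradient_cube_zero {ψ : Eu → ℝ} (hψ : ContDiff ℝ 1 ψ)
    (hper : IsZdPeriodic d ψ) :
    ∫ y in unitCube d, gradient ψ y = 0 := by
  cases d with
  | zero =>
      haveI : Subsingleton (EuclideanSpace ℝ (Fin 0)) :=
        ⟨fun a b => PiLp.ext fun i => Fin.elim0 i⟩
      exact Subsingleton.elim _ _
  | succ n =>
      set L := (PiLp.continuousLinearEquiv 2 ℝ (fun _ : Fin (n+1) => ℝ))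
      have hgradc : Continuous (fun y => gradient ψ y) := continuous_gradient hψ
      have hInt : IntegrableOn (fun y => gradient ψ y) (unitCube (n+1)) :=
        integrableOn_cube hgradc
      apply PiLp.ext
      intro i
      -- reduce to scalar component
      have hproj := ContinuousLinearMap.integral_comp_comm
        (EuclideanSpace.proj (𝕜 := ℝ) i) hInt
      have hcomp : (∫ y in unitCube (n+1), gradient ψ y) i
          = ∫ y in unitCube (n+1), (gradient ψ y) i := hproj.symm
      show (∫ y in unitCube (n+1), gradient ψ y) i = 0
      rw [hcomp]
      -- transfer to `Fin (n+1) → ℝ`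
      have hmp : MeasurePreserving ((MeasurableEquiv.toLp 2 (Fin (n+1) → ℝ)).symm).symm
          volume volume :=
        (EuclideanSpace.volume_preserving_symm_measurableEquiv_toLp (Fin (n+1))).symm
      have hemb : MeasurableEmbedding ((MeasurableEquiv.toLp 2 (Fin (n+1) → ℝ)).symm).symm :=
        ((MeasurableEquiv.toLp 2 (Fin (n+1) → ℝ)).symm).symm.measurableEmbedding
      have hpre : ((MeasurableEquiv.toLp 2 (Fin (n+1) → ℝ)).symm).symm ⁻¹' unitCube (n+1) =
          Set.univ.pi fun _ : Fin (n+1) => Set.Ico (0:ℝ) 1 := by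
        ext x
        simp only [unitCube, Set.mem_preimage, Set.mem_setOf_eq, Set.mem_univ_pi]
        rfl
      have hae : (Set.univ.pi fun _ : Fin (n+1) => Set.Ico (0:ℝ) 1) =ᵐ[volume]
          Set.Icc (0 : Fin (n+1) → ℝ) 1 := by
        rw [volume_pi]
        exact MeasureTheory.Measure.univ_pi_Ico_ae_eq_Icc
      rw [← hmp.setIntegral_preimage_emb hemb, hpre, setIntegral_congr_set hae]
      -- now apply the divergence computation
      set Q : (Fin (n+1) → ℝ) → ℝ := fun x => ψ (L.symm x) with hQ
      set DQ : (Fin (n+1) → ℝ) → (Fin (n+1) → ℝ) →L[ℝ] ℝ :=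
        fun x => (fderiv ℝ ψ (L.symm x)).comp
          (L.symm : (Fin (n+1) → ℝ) →L[ℝ] EuclideanSpace ℝ (Fin (n+1))) with hDQ
      have hsingle : (L.symm (Pi.single i 1) : EuclideanSpace ℝ (Fin (n+1)))
          = intVec (n+1) (Pi.single i 1) := by
        refine PiLp.ext fun j => ?_
        show (Pi.single i 1 : Fin (n+1) → ℝ) j = (((Pi.single i 1 : Fin (n+1) → ℤ) j : ℤ) : ℝ)
        by_cases h : j = i
        · subst h; simp
        · simp [Pi.single_eq_of_ne h]
      have hQper : ∀ x, Q (x + Pi.single i 1) = Q x := by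
        intro x
        show ψ (L.symm (x + Pi.single i 1)) = ψ (L.symm x)
        rw [map_add, hsingle]
        exact hper _ _
      have hDQ' : ∀ x, HasFDerivAt Q (DQ x) x := by
        intro x
        exact ((hψ.differentiable one_ne_zero _).hasFDerivAt).comp x L.symm.hasFDerivAt
      have hDQc : Continuous fun x => DQ x (Pi.single i 1) := by
        have : Continuous fun x => fderiv ℝ ψ (L.symm x) :=
          (hψ.continuous_fderiv one_ne_zero).comp L.symm.continuous
        exact this.clm_apply continuous_const
      have hcore := divergence_core Q DQ i
        (hψ.continuous.comp L.symm.continuous) hDQ' hDQc hQper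
      rw [← hcore]
      apply setIntegral_congr_fun measurableSet_Icc
      intro x _
      show (gradient ψ (((MeasurableEquiv.toLp 2 (Fin (n+1) → ℝ)).symm).symm x)) i
          = DQ x (Pi.single i 1)
      have hxy : (((MeasurableEquiv.toLp 2 (Fin (n+1) → ℝ)).symm).symm x
          : EuclideanSpace ℝ (Fin (n+1))) = L.symm x := rfl
      rw [hxy]
      show (gradient ψ (L.symm x)) i = fderiv ℝ ψ (L.symm x) (L.symm (Pi.single i 1))
      rw [fderiv_apply_eq_inner]
      have : (L.symm (Pi.single i 1) : EuclideanSpace ℝ (Fin (n+1)))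
          = EuclideanSpace.single i (1:ℝ) := rfl
      rw [this, EuclideanSpace.inner_single_right]
      simp

end Stmt9Aux

namespace Stmt9Aux

variable {d : ℕ}

local notation "Eu" => EuclideanSpace ℝ (Fin d)

lemma measurableSet_unitCube : MeasurableSet (unitCube d) := by
  have : unitCube d = ((MeasurableEquiv.toLp 2 (Fin d → ℝ)).symm) ⁻¹'
      (Set.univ.pi fun _ : Fin d => Set.Ico (0:ℝ) 1) := by
    ext x
    simp only [unitCube, Set.mem_preimage, Set.mem_setOf_eq, Set.mem_univ_pi]
    rfl
  rw [this]
  exact (MeasurableSet.univ_pi fun _ => measurableSet_Ico).preimage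
    ((MeasurableEquiv.toLp 2 (Fin d → ℝ)).symm).measurable

lemma volume_unitCube : volume (unitCube d) = 1 := by
  have hmp : MeasurePreserving ((MeasurableEquiv.toLp 2 (Fin d → ℝ)).symm).symm
      volume volume :=
    (EuclideanSpace.volume_preserving_symm_measurableEquiv_toLp (Fin d)).symm
  have hpre : ((MeasurableEquiv.toLp 2 (Fin d → ℝ)).symm).symm ⁻¹' unitCube d =
      Set.univ.pi fun _ : Fin d => Set.Ico (0:ℝ) 1 := by
    ext x
    simp only [unitCube, Set.mem_preimage, Set.mem_setOf_eq, Set.mem_univ_pi]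
    rfl
  have := hmp.measure_preimage (measurableSet_unitCube.nullMeasurableSet)
  rw [hpre] at this
  rw [← this, volume_pi, Measure.pi_pi]
  simp [Real.volume_Ico]

lemma shift_eq_inner {ψ : Eu → ℝ} (hψ : Differentiable ℝ ψ)
    (hgrad : IsZdPeriodic d (fun y => gradient ψ y)) (k : Fin d → ℤ) :
    ψ (intVec d k) - ψ 0 =
      (⟪intVec d k, (WithLp.toLp 2 (fun i => ψ (intVec d (Pi.single i 1)) - ψ 0) : Eu)⟫ : ℝ) := by
  classical
  set h : (Fin d → ℤ) → ℝ := fun k => ψ (intVec d k) - ψ 0 with hh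
  have hadd : ∀ k l : Fin d → ℤ, h (k + l) = h k + h l := by
    intro k l
    have hsplit : intVec d (k + l) = intVec d k + intVec d l := by
      refine PiLp.ext fun j => ?_
      show ((k j + l j : ℤ) : ℝ) = (k j : ℝ) + (l j : ℝ)
      push_cast; ring
    have := shift_const hψ hgrad l (intVec d k)
    simp only [hh, hsplit, this]
    ring
  set H : (Fin d → ℤ) →+ ℝ := AddMonoidHom.mk' h hadd with hH
  have hsum : h k = ∑ i, (k i : ℝ) * h (Pi.single i 1) := by
    have h1 : k = ∑ i, Pi.single i (k i) := by
      exact (Finset.univ_sum_single k).symm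
    calc h k = H k := rfl
      _ = H (∑ i, Pi.single i (k i)) := by rw [← h1]
      _ = ∑ i, H (Pi.single i (k i)) := map_sum H _ _
      _ = ∑ i, (k i : ℝ) * h (Pi.single i 1) := by
          apply Finset.sum_congr rfl
          intro i _
          have : Pi.single i (k i) = k i • (Pi.single i (1:ℤ) : Fin d → ℤ) := by
            rw [← Pi.single_smul, smul_eq_mul, mul_one]
          rw [this, map_zsmul H, zsmul_eq_mul]
          rfl
  have hinner : (⟪intVec d k, (WithLp.toLp 2 (fun i => ψ (intVec d (Pi.single i 1)) - ψ 0) : Eu)⟫ : ℝ)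
      = ∑ i, (k i : ℝ) * h (Pi.single i 1) := by
    rw [PiLp.inner_apply]
    apply Finset.sum_congr rfl
    intro i _
    simp only [RCLike.inner_apply, conj_trivial]
    exact mul_comm _ _
  rw [hinner]
  exact hsum

lemma decomposition {ψ : Eu → ℝ} (hψ : ContDiff ℝ 1 ψ)
    (hgrad : IsZdPeriodic d (fun y => gradient ψ y)) :
    ∃ (q : Eu → ℝ) (v : Eu), ContDiff ℝ 1 q ∧ IsZdPeriodic d q ∧
      (∀ y, gradient ψ y = gradient q y + v) ∧
      (∫ y in unitCube d, gradient ψ y) = v := by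
  set v : Eu := WithLp.toLp 2 (fun i => ψ (intVec d (Pi.single i 1)) - ψ 0) with hv
  set q : Eu → ℝ := fun y => ψ y - (⟪y, v⟫ : ℝ) with hq
  have hinnercd : ContDiff ℝ 1 (fun y : Eu => (⟪y, v⟫ : ℝ)) := by
    have h : (fun y : Eu => (⟪y, v⟫ : ℝ)) = fun y => innerSL ℝ v y := by
      funext y; exact real_inner_comm _ _
    rw [h]
    exact (innerSL ℝ v).contDiff
  have hqc : ContDiff ℝ 1 q := hψ.sub hinnercd
  have hqper : IsZdPeriodic d q := by
    intro x k
    simp only [hq]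
    rw [shift_const (hψ.differentiable one_ne_zero) hgrad k x, inner_add_left,
      ← shift_eq_inner (hψ.differentiable one_ne_zero) hgrad k]
    ring
  have hgr : ∀ y, gradient ψ y = gradient q y + v := by
    intro y
    have := (gradient_sub_inner (hψ.differentiable one_ne_zero) v y).gradient
    rw [hq, this]
    abel
  refine ⟨q, v, hqc, hqper, hgr, ?_⟩
  have hIq : IntegrableOn (fun y => gradient q y) (unitCube d) :=
    integrableOn_cube (continuous_gradient hqc)
  have hIv : IntegrableOn (fun _ : Eu => v) (unitCube d) := by
    rw [integrableOn_const_iff]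
    exact Or.inr (by rw [volume_unitCube]; exact ENNReal.one_lt_top)
  calc ∫ y in unitCube d, gradient ψ y = ∫ y in unitCube d, (gradient q y + v) := by
        apply integral_congr_ae (ae_of_all _ fun y => hgr y)
    _ = (∫ y in unitCube d, gradient q y) + ∫ _ in unitCube d, v :=
        integral_add hIq hIv
    _ = v := by
        rw [integral_gradient_cube_zero hqc hqper, setIntegral_const, measureReal_def, volume_unitCube]
        simp

end Stmt9Aux


/-- The condition `∫ b·∇ψ dμ = 0` for every `C¹` `ℤ^d`-periodic `ψ` is equivalent to the
divergence-curl identity: for every `C¹` function `ψ` whose gradient is `ℤ^d`-periodic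
(and continuous), `∫ b·∇ψ dμ = (∫ b dμ)·(∫_{[0,1)^d} ∇ψ(y) dy)`. -/
theorem stmt9 (d : ℕ) (b : EuclideanSpace ℝ (Fin d) → EuclideanSpace ℝ (Fin d))
    (hb : ContDiff ℝ 1 b) (hbper : IsZdPeriodic d b)
    (μ : Measure (EuclideanSpace ℝ (Fin d))) (hμ : IsTorusMeasure μ) :
    (∀ ψ : EuclideanSpace ℝ (Fin d) → ℝ, ContDiff ℝ 1 ψ → IsZdPeriodic d ψ →
        ∫ y, (⟪b y, gradient ψ y⟫ : ℝ) ∂μ = 0) ↔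
      (∀ ψ : EuclideanSpace ℝ (Fin d) → ℝ, ContDiff ℝ 1 ψ →
        IsZdPeriodic d (fun y => gradient ψ y) →
        ∫ y, (⟪b y, gradient ψ y⟫ : ℝ) ∂μ =
          (⟪∫ y, b y ∂μ, ∫ y in unitCube d, gradient ψ y⟫ : ℝ)) := by
  haveI := hμ.1
  have hbInt : Integrable b μ := Stmt9Aux.integrable_of_periodic μ hb.continuous hbper
  constructor
  · intro H ψ hψ hgrad
    obtain ⟨q, v, hq1, hq2, hgr, hint⟩ := Stmt9Aux.decomposition hψ hgrad
    rw [hint]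
    have hqgradper : IsZdPeriodic d (fun y => gradient q y) :=
      Stmt9Aux.grad_periodic_of_periodic (hq1.differentiable one_ne_zero) hq2
    have hI1 : Integrable (fun y => (⟪b y, gradient q y⟫ : ℝ)) μ :=
      Stmt9Aux.integrable_of_periodic μ
        (hb.continuous.inner (Stmt9Aux.continuous_gradient hq1))
        (fun x k => by
          have h2 : gradient q (x + intVec d k) = gradient q x := hqgradper x k
          rw [hbper x k, h2])
    have hI2 : Integrable (fun y => (⟪b y, v⟫ : ℝ)) μ :=
      Stmt9Aux.integrable_of_periodic μ (hb.continuous.inner continuous_const)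
        (fun x k => by rw [hbper x k])
    have h1 : ∀ y, (⟪b y, gradient ψ y⟫ : ℝ) = ⟪b y, gradient q y⟫ + ⟪b y, v⟫ := fun y => by
      rw [hgr y, inner_add_right]
    rw [integral_congr_ae (ae_of_all _ h1), integral_add hI1 hI2, H q hq1 hq2, zero_add]
    calc ∫ y, (⟪b y, v⟫ : ℝ) ∂μ = ∫ y, (⟪v, b y⟫ : ℝ) ∂μ :=
          integral_congr_ae (ae_of_all _ fun y => real_inner_comm _ _)
      _ = ⟪v, ∫ y, b y ∂μ⟫ := integral_inner hbInt v
      _ = ⟪∫ y, b y ∂μ, v⟫ := real_inner_comm _ _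
  · intro H ψ hψ hper
    have hgrad := Stmt9Aux.grad_periodic_of_periodic (hψ.differentiable one_ne_zero) hper
    rw [H ψ hψ hgrad, Stmt9Aux.integral_gradient_cube_zero hψ hper, inner_zero_right]
end
end

section
/- Let b : ℝ → ℝ be a C¹ 1-periodic function with b(y) ≠ 0 for all y, and let X(t,x) be the flow of X' = b(X). Then the probability measure μ(dy) = (b̲ / b(y)) dy on the torus Y₁ = ℝ/ℤ, where b̲ := (∫₀¹ dy/b(y))⁻¹, is the unique invariant probability measure for the flow, and for every x ∈ ℝ, X(t,x)/t → b̲ as t → ∞. -/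
open MeasureTheory Filter Topology

noncomputable section

/-- A Borel probability measure on the one-dimensional torus `Y₁ = ℝ/ℤ`, identified with a
Borel probability measure on `ℝ` carried by the fundamental domain `[0,1)`. -/
def IsTorusMeasure1 (μ : Measure ℝ) : Prop :=
  IsProbabilityMeasure μ ∧ μ (Set.Ico (0 : ℝ) 1)ᶜ = 0

/-- A measure on the torus `Y₁` is invariant for the flow `X` if
`∫ φ(X(t,y)) dμ(y) = ∫ φ dμ` for all `t` and all continuous `1`-periodic `φ`. -/
def IsInvariantMeasure1 (X : ℝ → ℝ → ℝ) (μ : Measure ℝ) : Prop :=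
  ∀ (t : ℝ) (φ : ℝ → ℝ), Continuous φ → Function.Periodic φ 1 →
    ∫ y, φ (X t y) ∂μ = ∫ y, φ y ∂μ

namespace Stmt11

open Set


/-- continuous periodic functions are bounded -/
lemma periodic_bounded {f : ℝ → ℝ} {c : ℝ} (hf : Continuous f)
    (hp : Function.Periodic f c) (hc : 0 < c) : ∃ K, ∀ x, |f x| ≤ K := by
  obtain ⟨K, hK⟩ := (isCompact_Icc (a := (0:ℝ)) (b := c)).exists_bound_of_continuousOn
    hf.continuousOn
  refine ⟨K, fun x => ?_⟩
  have h1 : f (x - (⌊x / c⌋ : ℤ) * c) = f x := hp.sub_int_mul_eq ⌊x / c⌋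
  have h2 : x - (⌊x / c⌋ : ℤ) * c ∈ Icc 0 c := by
    constructor
    · have := Int.sub_floor_div_mul_nonneg x hc
      simpa using this
    · have := Int.sub_floor_div_mul_lt x hc
      simpa using this.le
  calc |f x| = ‖f (x - (⌊x / c⌋ : ℤ) * c)‖ := by rw [h1]; rfl
    _ ≤ K := hK _ h2

/-- The primitive of a continuous periodic function minus its linear drift is periodic. -/
lemma primitive_sub_linear_periodic {ψ : ℝ → ℝ} {c : ℝ} (hψ : Continuous ψ)
    (hp : Function.Periodic ψ c) (hc : c ≠ 0) :
    Function.Periodic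
      (fun a => (∫ u in (0:ℝ)..a, ψ u) - (∫ u in (0:ℝ)..c, ψ u) / c * a) c := by
  intro a
  have h1 : (∫ u in (0:ℝ)..(a + c), ψ u)
      = (∫ u in (0:ℝ)..a, ψ u) + ∫ u in a..(a+c), ψ u :=
    (intervalIntegral.integral_add_adjacent_intervals
      (hψ.intervalIntegrable _ _) (hψ.intervalIntegrable _ _)).symm
  have h2 : (∫ u in a..(a+c), ψ u) = ∫ u in (0:ℝ)..(0+c), ψ u :=
    hp.intervalIntegral_add_eq a 0
  simp only []
  rw [h1, h2, zero_add]
  field_simp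
  ring

/-- bounded drift version -/
lemma primitive_drift_bounded {ψ : ℝ → ℝ} {c : ℝ} (hψ : Continuous ψ)
    (hp : Function.Periodic ψ c) (hc : 0 < c) :
    ∃ K, ∀ a, |(∫ u in (0:ℝ)..a, ψ u) - (∫ u in (0:ℝ)..c, ψ u) / c * a| ≤ K := by
  have hF : Continuous (fun a => (∫ u in (0:ℝ)..a, ψ u)) := by
    refine intervalIntegral.continuous_primitive (fun a b => hψ.intervalIntegrable a b) 0
  exact periodic_bounded (by fun_prop) (primitive_sub_linear_periodic hψ hp hc.ne') hc



lemma infDist_periodic {C : Set ℝ} (hC : ∀ y, y ∈ C ↔ y + 1 ∈ C) (x : ℝ) :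
    Metric.infDist (x + 1) C = Metric.infDist x C := by
  have himg : (fun y => y + 1) '' C = C := by
    ext y
    constructor
    · rintro ⟨z, hz, rfl⟩; exact (hC z).1 hz
    · intro hy
      exact ⟨y - 1, by rw [hC (y-1)]; simpa using hy, by ring⟩
  calc Metric.infDist (x + 1) C = Metric.infDist (x + 1) ((fun y => y + 1) '' C) := by
        rw [himg]
    _ = Metric.infDist x C := Metric.infDist_image (Isometry.of_dist_eq (by
        intro a b; simp [Real.dist_eq]))

/-- Two torus probability measures agreeing on continuous periodic functions are equal. -/
lemma measure_eq_of_integral_periodic_eq (μ ν : Measure ℝ)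
    (hμp : IsProbabilityMeasure μ) (hνp : IsProbabilityMeasure ν)
    (hμ : μ (Set.Ico (0:ℝ) 1)ᶜ = 0) (hν : ν (Set.Ico (0:ℝ) 1)ᶜ = 0)
    (h : ∀ φ : ℝ → ℝ, Continuous φ → Function.Periodic φ 1 →
      ∫ x, φ x ∂μ = ∫ x, φ x ∂ν) :
    μ = ν := by
  apply Measure.ext_of_Iic
  intro a
  rcases lt_or_ge a 0 with ha | ha
  · have h1 : Set.Iic a ⊆ (Set.Ico (0:ℝ) 1)ᶜ := by
      intro x hx
      simp only [mem_compl_iff, mem_Ico, not_and, not_lt, mem_Iic] at *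
      intro h0; linarith
    rw [measure_mono_null h1 hμ, measure_mono_null h1 hν]
  rcases lt_or_ge a 1 with ha1 | ha1
  swap
  · have h1 : (Set.Iic a)ᶜ ⊆ (Set.Ico (0:ℝ) 1)ᶜ := by
      intro x hx
      simp only [mem_compl_iff, mem_Iic, not_le, mem_Ico, not_and, not_lt] at *
      intro h0; linarith
    have e1 : μ (Set.Iic a) = 1 := by
      have := measure_add_measure_compl (μ := μ) (measurableSet_Iic (a := a))
      rw [measure_mono_null h1 hμ, add_zero] at this
      rw [this, measure_univ]
    have e2 : ν (Set.Iic a) = 1 := by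
      have := measure_add_measure_compl (μ := ν) (measurableSet_Iic (a := a))
      rw [measure_mono_null h1 hν, add_zero] at this
      rw [this, measure_univ]
    rw [e1, e2]
  · -- main case : 0 ≤ a < 1
    set C : Set ℝ := (⋃ k : ℤ, Set.Ioo (a + k) (1 + k))ᶜ with hCdef
    have hCclosed : IsClosed C := (isOpen_iUnion fun k => isOpen_Ioo).isClosed_compl
    have haC : a ∈ C := by
      simp only [hCdef, mem_compl_iff, mem_iUnion, mem_Ioo, not_exists, not_and, not_lt]
      intro k hk
      have hk' : k < 0 := by exact_mod_cast (by linarith : (k:ℝ) < 0)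
      have hk2 : k ≤ -1 := by omega
      have : (k : ℝ) ≤ -1 := by exact_mod_cast hk2
      linarith
    have hCper : ∀ y, y ∈ C ↔ y + 1 ∈ C := by
      intro y
      simp only [hCdef, mem_compl_iff, mem_iUnion, mem_Ioo, not_exists, not_and, not_lt]
      constructor
      · intro hy k hk
        have := hy (k - 1) (by push_cast; linarith)
        push_cast at this ⊢; linarith
      · intro hy k hk
        have := hy (k + 1) (by push_cast; linarith)
        push_cast at this ⊢; linarith
    -- C ∩ [0,1) = [0,a]
    have hCint : C ∩ Set.Ico 0 1 = Set.Icc 0 a := by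
      ext x
      simp only [hCdef, mem_inter_iff, mem_compl_iff, mem_iUnion, mem_Ioo, not_exists,
        not_and, not_lt, mem_Ico, mem_Icc]
      constructor
      · rintro ⟨hx, h0, h1'⟩
        refine ⟨h0, ?_⟩
        by_contra hxa
        push_neg at hxa
        have := hx 0 (by push_cast; linarith)
        push_cast at this; linarith
      · rintro ⟨h0, hxa⟩
        refine ⟨?_, h0, by linarith⟩
        intro k hk
        rcases lt_trichotomy k 0 with hk0 | rfl | hk0
        · have hk2 : k ≤ -1 := by omega
          have : (k : ℝ) ≤ -1 := by exact_mod_cast hk2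
          linarith
        · push_cast at hk ⊢; linarith
        · have : (1 : ℝ) ≤ (k : ℝ) := by exact_mod_cast hk0
          linarith
    have hIic : Set.Iic a ∩ Set.Ico 0 1 = Set.Icc 0 a := by
      ext x
      simp only [mem_inter_iff, mem_Iic, mem_Ico, mem_Icc]
      constructor
      · rintro ⟨h1', h2', _⟩; exact ⟨h2', h1'⟩
      · rintro ⟨h1', h2'⟩; exact ⟨h2', h1', by linarith⟩
    -- reduce to μ C = ν C
    have hμIic : μ (Set.Iic a) = μ C := by
      calc μ (Set.Iic a) = μ (Set.Iic a ∩ Set.Ico 0 1) := (measure_inter_conull hμ).symm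
        _ = μ (C ∩ Set.Ico 0 1) := by rw [hIic, hCint]
        _ = μ C := measure_inter_conull hμ
    have hνIic : ν (Set.Iic a) = ν C := by
      calc ν (Set.Iic a) = ν (Set.Iic a ∩ Set.Ico 0 1) := (measure_inter_conull hν).symm
        _ = ν (C ∩ Set.Ico 0 1) := by rw [hIic, hCint]
        _ = ν C := measure_inter_conull hν
    rw [hμIic, hνIic]
    -- approximate indicator of C by continuous periodic functions
    set f : ℕ → ℝ → ℝ := fun n x => max 0 (1 - n * Metric.infDist x C) with hfdef
    have hfcont : ∀ n, Continuous (f n) := by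
      intro n
      exact continuous_const.max (continuous_const.sub (continuous_const.mul (Metric.continuous_infDist_pt C)))
    have hfper : ∀ n, Function.Periodic (f n) 1 := by
      intro n x
      simp only [hfdef, infDist_periodic hCper]
    have hf01 : ∀ n x, 0 ≤ f n x ∧ f n x ≤ 1 := by
      intro n x
      refine ⟨le_max_left _ _, ?_⟩
      simp only [hfdef, max_le_iff]
      constructor
      · norm_num
      · have : 0 ≤ (n : ℝ) * Metric.infDist x C :=
          mul_nonneg (Nat.cast_nonneg n) Metric.infDist_nonneg
        linarith
    have hfanti : ∀ x, Antitone fun n => f n x := by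
      intro x n m hnm
      apply max_le_max le_rfl
      have : (n : ℝ) * Metric.infDist x C ≤ (m : ℝ) * Metric.infDist x C :=
        mul_le_mul_of_nonneg_right (by exact_mod_cast hnm) Metric.infDist_nonneg
      linarith
    have hftend : ∀ x, Tendsto (fun n => f n x) atTop (𝓝 (C.indicator (fun _ => (1:ℝ)) x)) := by
      intro x
      by_cases hx : x ∈ C
      · have : ∀ n, f n x = 1 := by
          intro n
          have h0 : Metric.infDist x C = 0 := Metric.infDist_zero_of_mem hx
          simp [hfdef, h0]
        rw [indicator_of_mem hx]
        simp only [this]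
        exact tendsto_const_nhds
      · have hd : 0 < Metric.infDist x C :=
          (hCclosed.notMem_iff_infDist_pos (⟨a, haC⟩ : C.Nonempty)).1 hx
        rw [indicator_of_notMem hx]
        have : ∀ᶠ n : ℕ in atTop, f n x = 0 := by
          filter_upwards [eventually_ge_atTop (⌈(Metric.infDist x C)⁻¹⌉₊)] with n hn
          have h1 : (Metric.infDist x C)⁻¹ ≤ (n : ℝ) :=
            le_trans (Nat.le_ceil _) (by exact_mod_cast hn)
          have h2 : 1 ≤ (n:ℝ) * Metric.infDist x C := by
            have h1' : (1:ℝ)/Metric.infDist x C ≤ n := by rwa [one_div]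
            rw [div_le_iff₀ hd] at h1'
            linarith
          simp only [hfdef, max_eq_left_iff]
          linarith
        exact Tendsto.congr' (this.mono fun n hn => hn.symm) tendsto_const_nhds
    -- monotone convergence on both sides
    have hint : ∀ (ρ : Measure ℝ), IsProbabilityMeasure ρ → ∀ n, Integrable (f n) ρ := by
      intro ρ hρ n
      exact Integrable.mono' (integrable_const 1) (hfcont n).aestronglyMeasurable
        (Eventually.of_forall fun x => by
          rw [Real.norm_eq_abs, abs_of_nonneg (hf01 n x).1]; exact (hf01 n x).2)
    have hindint : ∀ (ρ : Measure ℝ), IsProbabilityMeasure ρ →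
        Integrable (C.indicator (fun _ => (1:ℝ))) ρ := by
      intro ρ hρ
      exact (integrable_const 1).indicator hCclosed.measurableSet
    have hμlim : Tendsto (fun n => ∫ x, f n x ∂μ) atTop (𝓝 ((μ C).toReal)) := by
      have := integral_tendsto_of_tendsto_of_antitone (hint μ hμp) (hindint μ hμp)
        (Eventually.of_forall hfanti) (Eventually.of_forall hftend)
      rwa [integral_indicator_const (1:ℝ) hCclosed.measurableSet, smul_eq_mul, mul_one] at this
    have hνlim : Tendsto (fun n => ∫ x, f n x ∂ν) atTop (𝓝 ((ν C).toReal)) := by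
      have := integral_tendsto_of_tendsto_of_antitone (hint ν hνp) (hindint ν hνp)
        (Eventually.of_forall hfanti) (Eventually.of_forall hftend)
      rwa [integral_indicator_const (1:ℝ) hCclosed.measurableSet, smul_eq_mul, mul_one] at this
    have heq : (fun n => ∫ x, f n x ∂μ) = fun n => ∫ x, f n x ∂ν := by
      funext n
      exact h (f n) (hfcont n) (hfper n)
    rw [heq] at hμlim
    have : (μ C).toReal = (ν C).toReal := tendsto_nhds_unique hμlim hνlim
    exact (ENNReal.toReal_eq_toReal_iff' (measure_ne_top μ C) (measure_ne_top ν C)).1 this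



/-- squeeze helper: if `|t + C - I * Y t| ≤ K` eventually and `t⁻¹ → 0`, then `Y t / t → I⁻¹`. -/
lemma tendsto_div_of_bound {l : Filter ℝ} (hl : Tendsto (fun t : ℝ => t⁻¹) l (𝓝 0))
    (hne : ∀ᶠ t in l, t ≠ 0) {Y : ℝ → ℝ} {I C K : ℝ} (hI : 0 < I)
    (hbound : ∀ᶠ t in l, |t + C - I * Y t| ≤ K) :
    Tendsto (fun t => Y t / t) l (𝓝 I⁻¹) := by
  have h0 : Tendsto (fun t => Y t / t - I⁻¹) l (𝓝 0) := by
    apply squeeze_zero_norm' (a := fun t => (K + |C|) / I * |t⁻¹|)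
    · filter_upwards [hne, hbound] with t ht hb
      have hIne : I ≠ 0 := hI.ne'
      have hid : Y t / t - I⁻¹ = (I * Y t - t) * I⁻¹ * t⁻¹ := by
        field_simp
      rw [Real.norm_eq_abs, hid, abs_mul, abs_mul]
      have h1 : |I * Y t - t| ≤ K + |C| := by
        have : I * Y t - t = -(t + C - I * Y t) + C := by ring
        rw [this]
        calc |(-(t + C - I * Y t)) + C| ≤ |(-(t + C - I * Y t))| + |C| := abs_add_le _ _
          _ ≤ K + |C| := by rw [abs_neg]; linarith
      have h2 : |I⁻¹| = I⁻¹ := abs_of_pos (by positivity)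
      rw [h2]
      calc |I * Y t - t| * I⁻¹ * |t⁻¹| ≤ (K + |C|) * I⁻¹ * |t⁻¹| := by
            apply mul_le_mul_of_nonneg_right (mul_le_mul_of_nonneg_right h1 (by positivity))
              (abs_nonneg _)
        _ = (K + |C|) / I * |t⁻¹| := by ring
    · have : Tendsto (fun t : ℝ => |t⁻¹|) l (𝓝 0) := by
        have := hl.abs
        simpa using this
      simpa using this.const_mul ((K + |C|) / I)
  have := h0.add_const I⁻¹
  simpa using this



theorem main_pos (b : ℝ → ℝ) (hb : ContDiff ℝ 1 b) (hbper : Function.Periodic b 1)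
    (hbpos : ∀ y, 0 < b y)
    (X : ℝ → ℝ → ℝ) (hX0 : ∀ x, X 0 x = x)
    (hX : ∀ x t, HasDerivAt (fun s => X s x) (b (X t x)) t) :
    (IsTorusMeasure1
        ((volume.restrict (Set.Ico (0 : ℝ) 1)).withDensity
          (fun y => ENNReal.ofReal ((∫ z in Set.Ico (0 : ℝ) 1, (b z)⁻¹)⁻¹ / b y)) ) ∧
      IsInvariantMeasure1 X
        ((volume.restrict (Set.Ico (0 : ℝ) 1)).withDensity
          (fun y => ENNReal.ofReal ((∫ z in Set.Ico (0 : ℝ) 1, (b z)⁻¹)⁻¹ / b y))) ∧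
      (∀ μ : Measure ℝ, IsTorusMeasure1 μ → IsInvariantMeasure1 X μ →
        μ = (volume.restrict (Set.Ico (0 : ℝ) 1)).withDensity
          (fun y => ENNReal.ofReal ((∫ z in Set.Ico (0 : ℝ) 1, (b z)⁻¹)⁻¹ / b y)))) ∧
    (∀ x : ℝ, Tendsto (fun t : ℝ => X t x / t) atTop
      (𝓝 ((∫ z in Set.Ico (0 : ℝ) 1, (b z)⁻¹)⁻¹))) ∧
    (∀ x : ℝ, Tendsto (fun t : ℝ => X t x / t) atBot
      (𝓝 ((∫ z in Set.Ico (0 : ℝ) 1, (b z)⁻¹)⁻¹))) := by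
  have hb0 : ∀ y, b y ≠ 0 := fun y => (hbpos y).ne'
  set I : ℝ := ∫ z in Set.Ico (0 : ℝ) 1, (b z)⁻¹ with hIdef
  set μ₀ : Measure ℝ := (volume.restrict (Set.Ico (0 : ℝ) 1)).withDensity
      (fun y => ENNReal.ofReal (I⁻¹ / b y)) with hμ₀def
  have hbc : Continuous b := hb.continuous
  have hbinvc : Continuous fun y => (b y)⁻¹ := hbc.inv₀ hb0
  have hbinvpos : ∀ y, 0 < (b y)⁻¹ := fun y => inv_pos.2 (hbpos y)
  have hbinvper : Function.Periodic (fun y => (b y)⁻¹) 1 := fun x => by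
    simp only [hbper x]
  set G : ℝ → ℝ := fun x => ∫ u in (0:ℝ)..x, (b u)⁻¹ with hGdef
  have hGd : ∀ x, HasDerivAt G ((b x)⁻¹) x := fun x =>
    (hbinvc.integral_hasStrictDerivAt 0 x).hasDerivAt
  have hGcont : Continuous G := by
    refine intervalIntegral.continuous_primitive (fun a c => hbinvc.intervalIntegrable a c) 0
  have hGmono : StrictMono G :=
    strictMono_of_deriv_pos (fun x => by rw [(hGd x).deriv]; exact hbinvpos x)
  have hG0 : G 0 = 0 := intervalIntegral.integral_same
  have hG1 : G 1 = I := by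
    rw [hGdef, hIdef]
    simp only []
    rw [intervalIntegral.integral_of_le zero_le_one, integral_Ioc_eq_integral_Ioo, ← integral_Ico_eq_integral_Ioo]
  have hIpos : 0 < I := by
    rw [← hG1, ← hG0]
    exact hGmono zero_lt_one
  -- linear drift bound for G
  obtain ⟨K, hK⟩ := primitive_drift_bounded hbinvc hbinvper zero_lt_one
  have hg1' : (∫ u in (0:ℝ)..1, (b u)⁻¹) = I := hG1
  have hK' : ∀ a, |G a - I * a| ≤ K := by
    intro a
    have h := hK a
    rw [div_one, hg1'] at h
    exact h
  -- G is surjective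
  have hGtop : Tendsto G atTop atTop := by
    have hlin : Tendsto (fun a => I * a + -K) atTop atTop :=
      tendsto_atTop_add_const_right atTop (-K)
        ((tendsto_const_mul_atTop_of_pos hIpos).2 tendsto_id)
    apply tendsto_atTop_mono ?_ hlin
    intro a
    have := (abs_le.1 (hK' a)).1
    linarith
  have hGbot : Tendsto G atBot atBot := by
    have hlin : Tendsto (fun a => I * a + K) atBot atBot :=
      tendsto_atBot_add_const_right atBot K
        ((tendsto_const_mul_atBot_of_pos hIpos).2 tendsto_id)
    apply tendsto_atBot_mono ?_ hlin
    intro a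
    have := (abs_le.1 (hK' a)).2
    linarith
  have hGsurj : Function.Surjective G := hGcont.surjective hGtop hGbot
  set e : ℝ ≃o ℝ := StrictMono.orderIsoOfSurjective G hGmono hGsurj with hedef
  set H : ℝ → ℝ := fun u => e.symm u with hHdef
  have hecoe : ∀ x, e x = G x := fun x => rfl
  have hHG : ∀ x, H (G x) = x := by
    intro x
    rw [hHdef]
    simp only []
    rw [← hecoe]
    exact e.symm_apply_apply x
  have hGH : ∀ u, G (H u) = u := by
    intro u
    rw [hHdef]
    simp only []
    rw [← hecoe]
    exact e.apply_symm_apply u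
  have hHcont : Continuous H := by
    rw [hHdef]
    exact (OrderIso.continuous e.symm)
  -- the flow identity
  have hflow : ∀ x t, G (X t x) = G x + t := by
    intro x t
    have hder : ∀ s : ℝ, HasDerivAt (fun r => G (X r x) - r) 0 s := by
      intro s
      have h1 : HasDerivAt (fun r => G (X r x)) ((b (X s x))⁻¹ * b (X s x)) s :=
        by have h := (hGd (X s x)).comp s (hX x s); exact h
      have h2 : (b (X s x))⁻¹ * b (X s x) = 1 := inv_mul_cancel₀ (hb0 _)
      rw [h2] at h1
      simpa using h1.fun_sub (hasDerivAt_id' s)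
    have hconst : (fun r => G (X r x) - r) t = (fun r => G (X r x) - r) 0 :=
      is_const_of_deriv_eq_zero (fun y => (hder y).differentiableAt)
        (fun y => (hder y).deriv) t 0
    simp only [hX0 x, sub_zero] at hconst
    linarith [hconst]
  have hXH : ∀ t x, X t x = H (G x + t) := by
    intro t x
    apply hGmono.injective
    rw [hflow x t, hGH]
  -- G translation and H translation
  have hGadd : ∀ x, G (x + 1) = G x + I := by
    have hper := primitive_sub_linear_periodic hbinvc hbinvper one_ne_zero
    intro x
    have := hper x
    simp only [div_one, mul_one] at this
    have hg1 : (∫ u in (0:ℝ)..1, (b u)⁻¹) = I := hG1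
    rw [hg1] at this
    have : G (x + 1) - I * (x + 1) = G x - I * x := this
    linarith [this]
  have hHadd : ∀ u, H (u + I) = H u + 1 := by
    intro u
    apply hGmono.injective
    rw [hGH, hGadd, hGH]
  -- ergodic limits
  have hlimits : ∀ (l : Filter ℝ), Tendsto (fun t : ℝ => t⁻¹) l (𝓝 0) →
      (∀ᶠ t in l, t ≠ 0) → ∀ x, Tendsto (fun t => X t x / t) l (𝓝 I⁻¹) := by
    intro l hl hne x
    apply tendsto_div_of_bound hl hne hIpos (C := G x) (K := K)
    filter_upwards with t
    have h1 := hK' (X t x)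
    rw [hflow x t] at h1
    have : |t + G x - I * X t x| = |G x + t - I * X t x| := by ring_nf
    rw [this]
    calc |G x + t - I * X t x| = |-(G x + t - I * X t x)| := (abs_neg _).symm
      _ = |I * X t x - (G x + t)| := by ring_nf
      _ ≤ K := by
          have : I * X t x - (G x + t) = -((G x + t) - I * X t x) := by ring
          rw [this, abs_neg]
          exact h1
  -- integral against μ₀ of any continuous function
  have hμ0ψ : ∀ ψ : ℝ → ℝ, Continuous ψ →
      ∫ y, ψ y ∂μ₀ = I⁻¹ * ∫ u in (0:ℝ)..I, ψ (H u) := by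
    intro ψ hψ
    have hmeas : Measurable fun y => Real.toNNReal (I⁻¹ / b y) :=
      (continuous_real_toNNReal.comp (continuous_const.div hbc hb0)).measurable
    have h1 : ∫ y, ψ y ∂μ₀
        = ∫ y, (Real.toNNReal (I⁻¹ / b y) : ℝ) • ψ y ∂(volume.restrict (Set.Ico (0:ℝ) 1)) := by
      rw [hμ₀def]
      exact integral_withDensity_eq_integral_smul hmeas ψ
    have h2 : ∀ y : ℝ, (Real.toNNReal (I⁻¹ / b y) : ℝ) • ψ y = (b y)⁻¹ • (I⁻¹ * ψ y) := by
      intro y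
      have hnn : (0:ℝ) ≤ I⁻¹ / b y := div_nonneg (inv_nonneg.2 hIpos.le) (hbpos y).le
      rw [smul_eq_mul, smul_eq_mul, Real.coe_toNNReal _ hnn, div_eq_mul_inv]
      ring
    rw [h1]
    simp only [h2]
    have h3 : ∫ y in Set.Ico (0:ℝ) 1, (b y)⁻¹ • (I⁻¹ * ψ y)
        = ∫ y in (0:ℝ)..1, (b y)⁻¹ • (I⁻¹ * ψ y) := by
      rw [intervalIntegral.integral_of_le zero_le_one, integral_Ioc_eq_integral_Ioo,
        ← integral_Ico_eq_integral_Ioo]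
    rw [h3]
    have h4 : ∫ y in (0:ℝ)..1, (b y)⁻¹ • (I⁻¹ * ψ y)
        = ∫ y in (0:ℝ)..1, (b y)⁻¹ • ((fun u => I⁻¹ * ψ (H u)) ∘ G) y := by
      apply intervalIntegral.integral_congr
      intro y _
      simp only [Function.comp_apply, hHG y]
    rw [h4]
    rw [intervalIntegral.integral_comp_smul_deriv (fun x _ => hGd x) hbinvc.continuousOn
      (show Continuous fun u => I⁻¹ * ψ (H u) from
        continuous_const.mul (hψ.comp hHcont))]
    rw [hG0, hG1, intervalIntegral.integral_const_mul]
  -- μ₀ is a probability measure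
  have hbintIco : IntegrableOn (fun y => (b y)⁻¹) (Set.Ico (0:ℝ) 1) volume :=
    (hbinvc.integrableOn_Icc).mono_set Set.Ico_subset_Icc_self
  have hμ₀prob : IsProbabilityMeasure μ₀ := by
    constructor
    rw [hμ₀def, withDensity_apply _ MeasurableSet.univ, Measure.restrict_univ]
    have hint : IntegrableOn (fun y => I⁻¹ / b y) (Set.Ico (0:ℝ) 1) volume := by
      simp only [div_eq_mul_inv]
      exact hbintIco.const_mul _
    rw [← ofReal_integral_eq_lintegral_ofReal hint
      (Eventually.of_forall fun y => div_nonneg (inv_nonneg.2 hIpos.le) (hbpos y).le)]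
    have : ∫ y in Set.Ico (0:ℝ) 1, I⁻¹ / b y = I⁻¹ * I := by
      simp only [div_eq_mul_inv]
      rw [integral_const_mul]
    rw [this, inv_mul_cancel₀ hIpos.ne', ENNReal.ofReal_one]
  have hμ₀null : μ₀ (Set.Ico (0:ℝ) 1)ᶜ = 0 := by
    rw [hμ₀def, withDensity_apply _ measurableSet_Ico.compl,
      Measure.restrict_restrict measurableSet_Ico.compl, compl_inter_self,
      Measure.restrict_empty, lintegral_zero_measure]
  -- periodicity of φ ∘ H
  have hHper : ∀ (φ : ℝ → ℝ), Function.Periodic φ 1 →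
      Function.Periodic (fun u => φ (H u)) I := by
    intro φ hper u
    simp only [hHadd u]
    exact hper (H u)
  -- invariance of μ₀
  have hinv₀ : IsInvariantMeasure1 X μ₀ := by
    intro t φ hφ hper
    have hL : (fun y => φ (X t y)) = fun y => φ (H (G y + t)) := by
      funext y
      rw [hXH t y]
    rw [hL]
    rw [hμ0ψ (fun y => φ (H (G y + t)))
      (show Continuous fun y => φ (H (G y + t)) from
        hφ.comp (hHcont.comp (hGcont.add continuous_const)))]
    rw [hμ0ψ φ hφ]
    congr 1
    have h5 : ∀ u : ℝ, φ (H (G (H u) + t)) = φ (H (u + t)) := by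
      intro u
      rw [hGH u]
    simp only [h5]
    rw [intervalIntegral.integral_comp_add_right (fun u => φ (H u)) t]
    have := (hHper φ hper).intervalIntegral_add_eq t 0
    simp only [zero_add] at this
    rw [zero_add, add_comm I t]
    exact this
  -- uniqueness
  have huniq : ∀ μ : Measure ℝ, IsTorusMeasure1 μ → IsInvariantMeasure1 X μ → μ = μ₀ := by
    intro μ hμt hμinv
    obtain ⟨hμprob, hμnull⟩ := hμt
    haveI := hμprob
    haveI := hμ₀prob
    apply measure_eq_of_integral_periodic_eq μ μ₀ hμprob hμ₀prob hμnull hμ₀null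
    intro φ hφ hper
    have hψc : Continuous fun u => φ (H u) := hφ.comp hHcont
    have hFc : Continuous fun a => ∫ u in (0:ℝ)..a, φ (H u) :=
      intervalIntegral.continuous_primitive (fun a c => hψc.intervalIntegrable a c) 0
    obtain ⟨K₂, hK₂⟩ := primitive_drift_bounded hψc (hHper φ hper) hIpos
    set L : ℝ := (∫ u in (0:ℝ)..I, φ (H u)) / I with hLdef
    have hK₂0 : 0 ≤ K₂ := by
      have h := hK₂ 0
      simp only [intervalIntegral.integral_same, mul_zero, sub_zero, abs_zero] at h
      exact h
    have hμ0φ : ∫ y, φ y ∂μ₀ = L := by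
      rw [hμ0ψ φ hφ, hLdef, inv_mul_eq_div]
    rw [hμ0φ]
    obtain ⟨Kφ, hKφ⟩ := periodic_bounded hφ hper zero_lt_one
    have key : ∀ T : ℝ, 0 < T → |(∫ y, φ y ∂μ) - L| ≤ 2 * K₂ / T := by
      intro T hT
      have hinner : ∀ y : ℝ, (∫ s in Set.Ioc (0:ℝ) T, φ (H (G y + s)))
          = (∫ u in (0:ℝ)..(G y + T), φ (H u)) - ∫ u in (0:ℝ)..(G y), φ (H u) := by
        intro y
        rw [← intervalIntegral.integral_of_le hT.le,
          intervalIntegral.integral_comp_add_left (fun u => φ (H u)) (G y), add_zero]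
        have h := intervalIntegral.integral_add_adjacent_intervals
          (hψc.intervalIntegrable (μ := volume) 0 (G y))
          (hψc.intervalIntegrable (μ := volume) (G y) (G y + T))
        linarith [h]
      have hinv' : ∀ s : ℝ, ∫ y, φ (H (G y + s)) ∂μ = ∫ y, φ y ∂μ := by
        intro s
        have h := hμinv s φ hφ hper
        rw [← h]
        congr 1
        funext y
        rw [hXH s y]
      haveI : IsFiniteMeasure (volume.restrict (Set.Ioc (0:ℝ) T)) := by
        constructor
        rw [Measure.restrict_apply_univ]
        exact measure_Ioc_lt_top
      have hFub : ∫ s in Set.Ioc (0:ℝ) T, (∫ y, φ (H (G y + s)) ∂μ) ∂volume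
          = ∫ y, (∫ s in Set.Ioc (0:ℝ) T, φ (H (G y + s)) ∂volume) ∂μ := by
        apply MeasureTheory.integral_integral_swap
        apply Integrable.mono' (integrable_const Kφ)
        · exact Continuous.aestronglyMeasurable
            (show Continuous fun p : ℝ × ℝ => φ (H (G p.2 + p.1)) from
              hφ.comp (hHcont.comp ((hGcont.comp continuous_snd).add continuous_fst)))
        · filter_upwards with p
          rw [Real.norm_eq_abs]
          exact hKφ _
      have hconst : ∫ s in Set.Ioc (0:ℝ) T, (∫ y, φ (H (G y + s)) ∂μ) ∂volume
          = T * ∫ y, φ y ∂μ := by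
        simp only [hinv']
        rw [setIntegral_const, measureReal_def, Real.volume_Ioc, smul_eq_mul, sub_zero,
          ENNReal.toReal_ofReal hT.le]
      have hpt : ∀ y : ℝ, |(∫ u in (0:ℝ)..(G y + T), φ (H u))
          - (∫ u in (0:ℝ)..(G y), φ (H u)) - L * T| ≤ 2 * K₂ := by
        intro y
        have h1 := hK₂ (G y + T)
        have h2 := hK₂ (G y)
        have hid : (∫ u in (0:ℝ)..(G y + T), φ (H u)) - (∫ u in (0:ℝ)..(G y), φ (H u)) - L * T
            = ((∫ u in (0:ℝ)..(G y + T), φ (H u)) - L * (G y + T))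
              + (-((∫ u in (0:ℝ)..(G y), φ (H u)) - L * (G y))) := by ring
        rw [hid]
        calc |((∫ u in (0:ℝ)..(G y + T), φ (H u)) - L * (G y + T))
              + (-((∫ u in (0:ℝ)..(G y), φ (H u)) - L * (G y)))|
            ≤ |(∫ u in (0:ℝ)..(G y + T), φ (H u)) - L * (G y + T)|
              + |(-((∫ u in (0:ℝ)..(G y), φ (H u)) - L * (G y)))| := abs_add_le _ _
          _ ≤ 2 * K₂ := by
              rw [abs_neg]
              linarith [h1, h2]
      have hintgr : Integrable (fun y => (∫ u in (0:ℝ)..(G y + T), φ (H u))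
          - ∫ u in (0:ℝ)..(G y), φ (H u)) μ := by
        apply Integrable.mono' (integrable_const (2 * K₂ + |L * T|))
        · exact ((hFc.comp (hGcont.add continuous_const)).sub
            (hFc.comp hGcont)).aestronglyMeasurable
        · filter_upwards with y
          rw [Real.norm_eq_abs]
          have h1 := hpt y
          calc |(∫ u in (0:ℝ)..(G y + T), φ (H u)) - ∫ u in (0:ℝ)..(G y), φ (H u)|
              = |((∫ u in (0:ℝ)..(G y + T), φ (H u)) - (∫ u in (0:ℝ)..(G y), φ (H u)) - L * T)
                + L * T| := by ring_nf
            _ ≤ |(∫ u in (0:ℝ)..(G y + T), φ (H u)) - (∫ u in (0:ℝ)..(G y), φ (H u)) - L * T|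
                + |L * T| := abs_add_le _ _
            _ ≤ 2 * K₂ + |L * T| := by linarith
      have hTA : T * (∫ y, φ y ∂μ) = ∫ y, ((∫ u in (0:ℝ)..(G y + T), φ (H u))
          - ∫ u in (0:ℝ)..(G y), φ (H u)) ∂μ := by
        rw [← hconst, hFub]
        congr 1
        funext y
        exact hinner y
      have hsub : T * (∫ y, φ y ∂μ) - L * T
          = ∫ y, ((∫ u in (0:ℝ)..(G y + T), φ (H u))
            - (∫ u in (0:ℝ)..(G y), φ (H u)) - L * T) ∂μ := by
        rw [integral_sub hintgr (integrable_const _), integral_const, probReal_univ,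
          one_smul, hTA]
      have hnorm : |T * (∫ y, φ y ∂μ) - L * T| ≤ 2 * K₂ := by
        rw [hsub]
        have h := norm_integral_le_of_norm_le_const (μ := μ)
          (C := 2 * K₂) (Eventually.of_forall fun y => by
            rw [Real.norm_eq_abs]; exact hpt y)
        rw [Real.norm_eq_abs, probReal_univ, mul_one] at h
        exact h
      have habs : T * |(∫ y, φ y ∂μ) - L| ≤ 2 * K₂ := by
        have hid : T * ((∫ y, φ y ∂μ) - L) = T * (∫ y, φ y ∂μ) - L * T := by ring
        calc T * |(∫ y, φ y ∂μ) - L| = |T| * |(∫ y, φ y ∂μ) - L| := by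
              rw [abs_of_pos hT]
          _ = |T * ((∫ y, φ y ∂μ) - L)| := (abs_mul _ _).symm
          _ = |T * (∫ y, φ y ∂μ) - L * T| := by rw [hid]
          _ ≤ 2 * K₂ := hnorm
      rw [le_div_iff₀ hT]
      calc |(∫ y, φ y ∂μ) - L| * T = T * |(∫ y, φ y ∂μ) - L| := by ring
        _ ≤ 2 * K₂ := habs
    -- conclude
    have hzero : |(∫ y, φ y ∂μ) - L| = 0 := by
      by_contra hd
      have hdpos : 0 < |(∫ y, φ y ∂μ) - L| :=
        lt_of_le_of_ne (abs_nonneg _) (Ne.symm hd)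
      set d := |(∫ y, φ y ∂μ) - L| with hddef
      have hTpos : 0 < (2 * K₂ + 1) / d := by positivity
      have h := key ((2 * K₂ + 1) / d) hTpos
      rw [div_div_eq_mul_div] at h
      rw [le_div_iff₀ (by positivity : (0:ℝ) < 2 * K₂ + 1)] at h
      nlinarith [h, hdpos, hK₂0]
    have := abs_eq_zero.1 hzero
    linarith [this]
  refine ⟨⟨⟨hμ₀prob, hμ₀null⟩, hinv₀, huniq⟩, ?_, ?_⟩
  · intro x
    exact hlimits atTop tendsto_inv_atTop_zero (eventually_ne_atTop 0) x
  · intro x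
    have hinvbot : Tendsto (fun t : ℝ => t⁻¹) atBot (𝓝 0) := by
      have h1 : Tendsto (fun t : ℝ => -t) atBot atTop := tendsto_neg_atBot_atTop
      have h2 : Tendsto (fun t : ℝ => (-t)⁻¹) atBot (𝓝 0) :=
        Tendsto.comp tendsto_inv_atTop_zero h1
      have h3 := h2.neg
      simp only [inv_neg, neg_neg, neg_zero] at h3
      exact h3
    exact hlimits atBot hinvbot (eventually_ne_atBot 0) x




end Stmt11

/-- If `b` is `C¹`, `1`-periodic and nonvanishing, then `(b̲/b(y)) dy`, with `b̲` the
harmonic mean of `b`, is the unique invariant probability measure on the torus for the flow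
of `X' = b(X)`, and `X(t,x)/t → b̲` as `t → ∞` for every `x`. -/
theorem stmt11 (b : ℝ → ℝ) (hb : ContDiff ℝ 1 b) (hbper : Function.Periodic b 1)
    (hb0 : ∀ y, b y ≠ 0)
    (X : ℝ → ℝ → ℝ) (hX0 : ∀ x, X 0 x = x)
    (hX : ∀ x t, HasDerivAt (fun s => X s x) (b (X t x)) t) :
    (IsTorusMeasure1
        ((volume.restrict (Set.Ico (0 : ℝ) 1)).withDensity
          (fun y => ENNReal.ofReal ((∫ z in Set.Ico (0 : ℝ) 1, (b z)⁻¹)⁻¹ / b y)) ) ∧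
      IsInvariantMeasure1 X
        ((volume.restrict (Set.Ico (0 : ℝ) 1)).withDensity
          (fun y => ENNReal.ofReal ((∫ z in Set.Ico (0 : ℝ) 1, (b z)⁻¹)⁻¹ / b y))) ∧
      (∀ μ : Measure ℝ, IsTorusMeasure1 μ → IsInvariantMeasure1 X μ →
        μ = (volume.restrict (Set.Ico (0 : ℝ) 1)).withDensity
          (fun y => ENNReal.ofReal ((∫ z in Set.Ico (0 : ℝ) 1, (b z)⁻¹)⁻¹ / b y)))) ∧
    ∀ x : ℝ, Tendsto (fun t : ℝ => X t x / t) atTop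
      (𝓝 ((∫ z in Set.Ico (0 : ℝ) 1, (b z)⁻¹)⁻¹)) := by
  have hsign : (∀ y, 0 < b y) ∨ (∀ y, b y < 0) := by
    by_contra hcon
    push_neg at hcon
    obtain ⟨⟨y₁, hy₁⟩, y₂, hy₂⟩ := hcon
    have h0 : (0:ℝ) ∈ Set.uIcc (b y₁) (b y₂) := by
      rw [Set.mem_uIcc]
      left
      exact ⟨hy₁, hy₂⟩
    obtain ⟨z, _, hz⟩ := intermediate_value_uIcc
      (hb.continuous.continuousOn (s := Set.uIcc y₁ y₂)) h0
    exact hb0 z hz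
  rcases hsign with hpos | hneg
  · obtain ⟨h1, h2, _⟩ := Stmt11.main_pos b hb hbper hpos X hX0 hX
    exact ⟨h1, h2⟩
  · -- reduce to the positive case via b' = -b, X' t = X (-t)
    set b' : ℝ → ℝ := fun y => -(b y) with hb'def
    have hb' : ContDiff ℝ 1 b' := hb.neg
    have hb'per : Function.Periodic b' 1 := fun x => by simp only [hb'def, hbper x]
    have hb'pos : ∀ y, 0 < b' y := fun y => neg_pos.2 (hneg y)
    set X' : ℝ → ℝ → ℝ := fun t x => X (-t) x with hX'def
    have hX'0 : ∀ x, X' 0 x = x := fun x => by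
      rw [hX'def]
      simp only [neg_zero]
      exact hX0 x
    have hX' : ∀ x t, HasDerivAt (fun s => X' s x) (b' (X' t x)) t := by
      intro x t
      have h1 : HasDerivAt (fun s => X s x) (b (X (-t) x)) (-t) := hX x (-t)
      have h2 : HasDerivAt (fun s : ℝ => -s) (-1) t := (hasDerivAt_id t).neg
      have h3 : HasDerivAt (fun s : ℝ => X (-s) x) (b (X (-t) x) * (-1)) t := h1.comp t h2
      have h4 : b (X (-t) x) * (-1) = b' (X' t x) := by
        rw [hb'def, hX'def]
        ring
      rw [h4] at h3
      exact h3
    obtain ⟨⟨htorus, hinv', huniq'⟩, _, hlimBot'⟩ :=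
      Stmt11.main_pos b' hb' hb'per hb'pos X' hX'0 hX'
    have hIeq : (∫ z in Set.Ico (0:ℝ) 1, (b' z)⁻¹) = -(∫ z in Set.Ico (0:ℝ) 1, (b z)⁻¹) := by
      rw [hb'def]
      simp only [inv_neg]
      exact integral_neg _
    have hdens : (fun y => ENNReal.ofReal ((∫ z in Set.Ico (0:ℝ) 1, (b' z)⁻¹)⁻¹ / b' y))
        = fun y => ENNReal.ofReal ((∫ z in Set.Ico (0:ℝ) 1, (b z)⁻¹)⁻¹ / b y) := by
      funext y
      rw [hIeq, hb'def]
      simp only [inv_neg]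
      rw [neg_div_neg_eq]
    rw [hdens] at htorus hinv' huniq'
    have hinveq : ∀ μ : Measure ℝ, IsInvariantMeasure1 X μ → IsInvariantMeasure1 X' μ := by
      intro μ hi t φ hφ hper
      exact hi (-t) φ hφ hper
    refine ⟨⟨htorus, ?_, ?_⟩, ?_⟩
    · intro t φ hφ hper
      have := hinv' (-t) φ hφ hper
      simp only [hX'def, neg_neg] at this
      exact this
    · intro μ hμt hμinv
      exact huniq' μ hμt (hinveq μ hμinv)
    · intro x
      have h1 := hlimBot' x
      rw [hIeq] at h1
      have h2 : Tendsto (fun t : ℝ => X' (-t) x / (-t)) atTop (𝓝 (-(∫ z in Set.Ico (0:ℝ) 1, (b z)⁻¹))⁻¹) :=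
        h1.comp tendsto_neg_atTop_atBot
      have h3 : (fun t : ℝ => X' (-t) x / (-t)) = fun t : ℝ => -(X t x / t) := by
        funext t
        rw [hX'def]
        simp only [neg_neg]
        rw [div_neg]
      rw [h3] at h2
      have h4 := h2.neg
      simp only [neg_neg] at h4
      rw [inv_neg, neg_neg] at h4
      exact h4
end
end

section
/- Let b : ℝ → ℝ be a C¹ 1-periodic function that vanishes at some point, and let μ be any invariant Borel probability measure on the torus Y₁ = ℝ/ℤ for the flow of X' = b(X). Then ∫_{{y : b(y)≠0}} (b(y)/|b(y)|) dμ(y) = 0. -/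
open MeasureTheory Filter Topology

open Set
open scoped NNReal

noncomputable section

/-- Uniqueness of solutions to the autonomous ODE `x' = b x` with Lipschitz `b`. -/
lemma sol_eq {b : ℝ → ℝ} {K : ℝ≥0} (hL : LipschitzWith K b) {f g : ℝ → ℝ}
    (hf : ∀ t, HasDerivAt f (b (f t)) t) (hg : ∀ t, HasDerivAt g (b (g t)) t)
    {t₀ : ℝ} (h : f t₀ = g t₀) (t₁ : ℝ) : f t₁ = g t₁ := by
  have h1 : min t₀ t₁ - 1 < t₀ := by have := min_le_left t₀ t₁; linarith
  have h2 : t₀ < max t₀ t₁ + 1 := by have := le_max_left t₀ t₁; linarith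
  have H := ODE_solution_unique_of_mem_Icc (v := fun _ x => b x) (s := fun _ => Set.univ)
    (K := K) (fun _ _ => hL.lipschitzOnWith) (t₀ := t₀)
    (a := min t₀ t₁ - 1) (b := max t₀ t₁ + 1) ⟨h1, h2⟩
    (Continuous.continuousOn (by
      exact continuous_iff_continuousAt.mpr fun t => (hf t).continuousAt))
    (fun t _ => hf t) (fun _ _ => trivial)
    (Continuous.continuousOn (by
      exact continuous_iff_continuousAt.mpr fun t => (hg t).continuousAt))
    (fun t _ => hg t) (fun _ _ => trivial) h
  exact H ⟨by have := min_le_right t₀ t₁; linarith, by have := le_max_right t₀ t₁; linarith⟩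

/-- A solution starting where `b > 0`, below some zero of `b`, converges to a zero of `b`. -/
lemma tendsto_of_pos {b : ℝ → ℝ} {K : ℝ≥0} (hb : Continuous b) (hL : LipschitzWith K b)
    {f : ℝ → ℝ} (hf : ∀ t, HasDerivAt f (b (f t)) t) (h0 : 0 < b (f 0))
    {z : ℝ} (hz0 : b z = 0) (hfz : f 0 < z) :
    ∃ ℓ, b ℓ = 0 ∧ Tendsto f atTop (𝓝 ℓ) := by
  have fc : Continuous f := continuous_iff_continuousAt.mpr fun t => (hf t).continuousAt
  -- f never hits zeros of b
  have hne : ∀ w, b w = 0 → ∀ t, f t ≠ w := by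
    intro w hw t hfw
    have hfw0 : f 0 = w := by
      have := sol_eq hL hf (g := fun _ => w)
        (fun t => by simpa [hw] using hasDerivAt_const t w) hfw 0
      simpa using this
    rw [hfw0, hw] at h0; exact lt_irrefl 0 h0
  have hbf : ∀ t, b (f t) ≠ 0 := fun t h => hne (f t) h t rfl
  -- b (f t) stays positive
  have hpos : ∀ t, 0 < b (f t) := by
    intro t
    rcases lt_trichotomy (b (f t)) 0 with h | h | h
    · exfalso
      have hc : ContinuousOn (fun s => b (f s)) (Set.uIcc 0 t) :=
        (hb.comp fc).continuousOn
      have h0mem : (0 : ℝ) ∈ Set.uIcc (b (f 0)) (b (f t)) := by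
        rw [Set.mem_uIcc]; right; exact ⟨h.le, h0.le⟩
      obtain ⟨s, _, hs⟩ := intermediate_value_uIcc hc h0mem
      exact hbf s hs
    · exact absurd h (hbf t)
    · exact h
  -- f stays below z
  have hlt : ∀ t, f t < z := by
    intro t
    rcases lt_or_ge (f t) z with h | h
    · exact h
    exfalso
    have hc : ContinuousOn f (Set.uIcc 0 t) := fc.continuousOn
    have hzmem : z ∈ Set.uIcc (f 0) (f t) := by
      rw [Set.mem_uIcc]; left; exact ⟨hfz.le, h⟩
    obtain ⟨s, _, hs⟩ := intermediate_value_uIcc hc hzmem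
    exact hne z hz0 s hs
  -- f is monotone and bounded, hence converges
  have hmono : StrictMono f := by
    apply strictMono_of_deriv_pos
    intro t
    rw [(hf t).deriv]
    exact hpos t
  have hbdd : BddAbove (Set.range f) := ⟨z, by rintro _ ⟨t, rfl⟩; exact (hlt t).le⟩
  set ℓ := ⨆ t, f t with hℓ
  have hten : Tendsto f atTop (𝓝 ℓ) := tendsto_atTop_ciSup hmono.monotone hbdd
  have hfle : ∀ t, f t ≤ ℓ := fun t => le_ciSup hbdd t
  refine ⟨ℓ, ?_, hten⟩
  by_contra hbl
  have hblpos : 0 < b ℓ := by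
    have htb : Tendsto (fun t => b (f t)) atTop (𝓝 (b ℓ)) := (hb.tendsto ℓ).comp hten
    have : 0 ≤ b ℓ := ge_of_tendsto htb (Eventually.of_forall fun t => (hpos t).le)
    exact lt_of_le_of_ne this (Ne.symm hbl)
  set c := b ℓ / 2 with hc
  have hcpos : 0 < c := by positivity
  -- b ≥ c in a left neighbourhood of ℓ
  obtain ⟨δ, hδpos, hδ⟩ : ∃ δ > 0, ∀ x, dist x ℓ < δ → c < b x := by
    have : ∀ᶠ x in 𝓝 ℓ, c < b x :=
      (hb.tendsto ℓ).eventually (eventually_gt_nhds (by linarith))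
    exact Metric.eventually_nhds_iff.mp this
  obtain ⟨T, hT⟩ : ∃ T, ℓ - δ < f T :=
    (hten.eventually (eventually_gt_nhds (by linarith))).exists
  -- derivative of f is ≥ c on [T, ∞)
  have hmem : ∀ t ∈ Set.Ici T, c ≤ b (f t) := by
    intro t ht
    have h1 : ℓ - δ < f t := lt_of_lt_of_le hT (hmono.monotone ht)
    have h2 : f t ≤ ℓ := hfle t
    exact (hδ (f t) (by rw [Real.dist_eq, abs_lt]; constructor <;> linarith)).le
  have key : ∀ t ∈ Set.Ici T, f T + c * (t - T) ≤ f t := by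
    intro t ht
    have hmon : MonotoneOn (fun s => f s - c * s) (Set.Ici T) := by
      apply monotoneOn_of_deriv_nonneg (convex_Ici T)
        (Continuous.continuousOn (by continuity))
      · intro s _
        exact ((hf s).sub (by simpa using (hasDerivAt_id s).const_mul c)).differentiableAt.differentiableWithinAt
      · intro s hs
        rw [interior_Ici] at hs
        have : deriv (fun s => f s - c * s) s = b (f s) - c := by
          have h1 : HasDerivAt (fun s => f s - c * s) (b (f s) - c) s :=
            (hf s).sub (by simpa using (hasDerivAt_id s).const_mul c)
          exact h1.deriv
        rw [this, sub_nonneg]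
        exact hmem s (Set.mem_Ici.mpr (le_of_lt hs))
    have := hmon (Set.self_mem_Ici) ht ht
    simp only at this
    nlinarith
  -- contradiction: f exceeds ℓ
  have hbig := key (T + (δ + 1) / c) (by
    simp only [Set.mem_Ici, le_add_iff_nonneg_right]; positivity)
  have : f T + c * ((δ + 1) / c) ≤ f (T + (δ + 1) / c) := by
    simpa using hbig
  rw [mul_div_cancel₀ _ (ne_of_gt hcpos)] at this
  have := hfle (T + (δ + 1) / c)
  linarith


lemma blip {b : ℝ → ℝ} (hb : ContDiff ℝ 1 b) (hper : Function.Periodic b 1) :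
    ∃ K : ℝ≥0, LipschitzWith K b := by
  have hd : Continuous (deriv b) := hb.continuous_deriv le_rfl
  obtain ⟨C, hC⟩ := isCompact_Icc.exists_bound_of_continuousOn
    (f := deriv b) (s := Set.Icc (0:ℝ) 1) hd.continuousOn
  have hper' : Function.Periodic (deriv b) 1 := by
    intro x
    have h1 : (fun y : ℝ => b (y + 1)) = b := funext hper
    calc deriv b (x + 1) = deriv (fun y : ℝ => b (y + 1)) x := (deriv_comp_add_const b 1 x).symm
      _ = deriv b x := by rw [h1]
  have hbound : ∀ x : ℝ, ‖deriv b x‖ ≤ max C 0 := by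
    intro x
    have h1 : deriv b (x - (⌊x⌋ : ℤ) * 1) = deriv b x := hper'.sub_int_mul_eq ⌊x⌋
    have h2 : x - (⌊x⌋ : ℤ) * 1 ∈ Set.Icc (0:ℝ) 1 := by
      constructor
      · simp only [mul_one]; linarith [Int.floor_le x]
      · simp only [mul_one]; linarith [Int.lt_floor_add_one x]
    calc ‖deriv b x‖ = ‖deriv b (x - (⌊x⌋ : ℤ) * 1)‖ := by rw [h1]
      _ ≤ C := hC _ h2
      _ ≤ max C 0 := le_max_left _ _
  refine ⟨(⟨max C 0, le_max_right _ _⟩ : ℝ≥0), lipschitzWith_of_nnnorm_deriv_le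
    (hb.differentiable one_ne_zero) fun x => ?_⟩
  show (‖deriv b x‖₊ : ℝ) ≤ max C 0
  exact hbound x


lemma exists_limit {b : ℝ → ℝ} {K : ℝ≥0} (hb : Continuous b) (hL : LipschitzWith K b)
    (hbper : Function.Periodic b 1) (hb0 : ∃ y : ℝ, b y = 0)
    {X : ℝ → ℝ → ℝ} (hX0 : ∀ x, X 0 x = x)
    (hX : ∀ x t, HasDerivAt (fun s => X s x) (b (X t x)) t) (y : ℝ) :
    ∃ ℓ, b ℓ = 0 ∧ Tendsto (fun t => X t y) atTop (𝓝 ℓ) := by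
  obtain ⟨y₀, hy₀⟩ := hb0
  rcases lt_trichotomy (b y) 0 with hy | hy | hy
  · -- reflect
    set b2 : ℝ → ℝ := fun x => -b (-x) with hb2
    have hb2c : Continuous b2 := (hb.comp continuous_neg).neg
    have hb2L : LipschitzWith K b2 := by
      apply LipschitzWith.of_dist_le_mul
      intro x x'
      have := hL.dist_le_mul (-x) (-x')
      simpa [b2, Real.dist_eq, abs_sub_comm] using this
    set f2 : ℝ → ℝ := fun t => -X t y with hf2
    have hf2d : ∀ t, HasDerivAt f2 (b2 (f2 t)) t := by
      intro t
      have := (hX y t).neg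
      simpa [b2, f2, Pi.neg_def] using this
    have hf20 : 0 < b2 (f2 0) := by
      simp only [f2, b2, hX0, neg_neg]
      linarith
    set n : ℤ := ⌈y₀ - y⌉ + 1 with hn
    have hbb : b (y₀ - (n:ℝ)) = 0 := by
      calc b (y₀ - (n:ℝ)) = b (y₀ - (n:ℝ) * 1) := by rw [mul_one]
        _ = b y₀ := hbper.sub_int_mul_eq n
        _ = 0 := hy₀
    have hz0 : b2 (-(y₀ - n)) = 0 := by
      simp only [b2, neg_neg, hbb, neg_zero]
    have hfz : f2 0 < -(y₀ - n) := by
      simp only [f2, hX0]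
      have h1 : (⌈y₀ - y⌉ : ℝ) ≥ y₀ - y := Int.le_ceil _
      have : (n : ℝ) = (⌈y₀ - y⌉ : ℝ) + 1 := by exact_mod_cast rfl
      rw [this]
      linarith
    obtain ⟨ℓ2, hℓ2, hten2⟩ := tendsto_of_pos hb2c hb2L hf2d hf20 hz0 hfz
    refine ⟨-ℓ2, ?_, ?_⟩
    · have : -b (-ℓ2) = 0 := hℓ2
      linarith
    · have := hten2.neg
      simpa [f2] using this
  · -- constant solution
    refine ⟨y, hy, ?_⟩
    have hconst : ∀ t, X t y = y := by
      intro t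
      have := sol_eq hL (f := fun t => X t y) (g := fun _ => y)
        (hX y) (fun t => by simpa [hy] using hasDerivAt_const t y)
        (t₀ := 0) (by simp [hX0]) t
      simpa using this
    have : (fun t => X t y) = fun _ => y := funext hconst
    rw [this]
    exact tendsto_const_nhds
  · -- positive case
    set n : ℤ := ⌈y - y₀⌉ + 1 with hn
    have hz0 : b (y₀ + n) = 0 := by
      have h' : y₀ + (n:ℝ) = y₀ - ((-n : ℤ) : ℝ) * 1 := by push_cast; ring
      rw [h', hbper.sub_int_mul_eq (-n)]
      exact hy₀
    have hfz : X 0 y < y₀ + n := by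
      rw [hX0]
      have h1 : (⌈y - y₀⌉ : ℝ) ≥ y - y₀ := Int.le_ceil _
      have : (n : ℝ) = (⌈y - y₀⌉ : ℝ) + 1 := by exact_mod_cast rfl
      rw [this]
      linarith
    exact tendsto_of_pos hb hL (hX y) (by rw [hX0]; exact hy) hz0 hfz

lemma flow_mono {b : ℝ → ℝ} {K : ℝ≥0} (hL : LipschitzWith K b)
    {X : ℝ → ℝ → ℝ} (hX0 : ∀ x, X 0 x = x)
    (hX : ∀ x t, HasDerivAt (fun s => X s x) (b (X t x)) t) (t : ℝ) :
    Monotone (fun y => X t y) := by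
  intro y y' hyy'
  rcases eq_or_lt_of_le hyy' with rfl | h
  · exact le_refl _
  · have hne : ∀ s, X s y' - X s y ≠ 0 := by
      intro s hs
      have heq : X s y = X s y' := by linarith [sub_eq_zero.mp hs]
      have := sol_eq hL (f := fun u => X u y) (g := fun u => X u y')
        (hX y) (hX y') (t₀ := s) heq 0
      simp only [hX0] at this
      exact absurd this (ne_of_lt h)
    have hcont : Continuous (fun s => X s y' - X s y) := by
      have c1 : Continuous (fun s => X s y) :=
        continuous_iff_continuousAt.mpr fun s => (hX y s).continuousAt
      have c2 : Continuous (fun s => X s y') :=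
        continuous_iff_continuousAt.mpr fun s => (hX y' s).continuousAt
      exact c2.sub c1
    have h0 : 0 < X 0 y' - X 0 y := by rw [hX0, hX0]; linarith
    have hpos : 0 < X t y' - X t y := by
      rcases lt_trichotomy (X t y' - X t y) 0 with hlt | heq | hgt
      · exfalso
        have h0mem : (0:ℝ) ∈ Set.uIcc (X 0 y' - X 0 y) (X t y' - X t y) := by
          rw [Set.mem_uIcc]; right; exact ⟨hlt.le, h0.le⟩
        obtain ⟨s, _, hs⟩ := intermediate_value_uIcc hcont.continuousOn h0mem
        exact hne s hs
      · exact absurd heq (hne t)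
      · exact hgt
    simp only
    linarith


/-- If `b` is `C¹`, `1`-periodic and vanishes at some point, then any invariant probability
measure `μ` on the torus for the flow of `X' = b(X)` satisfies
`∫_{{b ≠ 0}} b/|b| dμ = 0`. -/
theorem stmt13 (b : ℝ → ℝ) (hb : ContDiff ℝ 1 b) (hbper : Function.Periodic b 1)
    (hb0 : ∃ y : ℝ, b y = 0)
    (X : ℝ → ℝ → ℝ) (hX0 : ∀ x, X 0 x = x)
    (hX : ∀ x t, HasDerivAt (fun s => X s x) (b (X t x)) t)
    (μ : Measure ℝ) (hμ : IsTorusMeasure1 μ) (hinv : IsInvariantMeasure1 X μ) :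
    ∫ y in {y : ℝ | b y ≠ 0}, b y / |b y| ∂μ = 0 := by
  obtain ⟨hprob, -⟩ := hμ
  haveI := hprob
  obtain ⟨K, hL⟩ := blip hb hbper
  have hbc : Continuous b := hb.continuous
  set Z : Set ℝ := {x | b x = 0} with hZ
  have hZc : IsClosed Z := isClosed_eq hbc continuous_const
  have hZne : Z.Nonempty := hb0
  haveI : Nonempty Z := hZne.to_subtype
  -- the test function
  set φ : ℝ → ℝ := fun x => max 0 (1 - Metric.infDist x Z) with hφ
  have hφc : Continuous φ :=
    continuous_const.max (continuous_const.sub (Metric.continuous_infDist_pt Z))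
  have hZshift : ∀ z ∈ Z, z + 1 ∈ Z := by
    intro z hz
    simp only [Z, Set.mem_setOf_eq] at hz ⊢
    rw [hbper z]; exact hz
  have hZshift' : ∀ z ∈ Z, z - 1 ∈ Z := by
    intro z hz
    simp only [Z, Set.mem_setOf_eq] at hz ⊢
    have h' : b (z - 1 + 1) = b (z - 1) := hbper (z - 1)
    rw [show z - 1 + 1 = z by ring] at h'
    rw [← h']
    exact hz
  have hinfper : ∀ x : ℝ, Metric.infDist (x + 1) Z = Metric.infDist x Z := by
    have key : ∀ (u v : ℝ) (T : ℝ → ℝ), (∀ z ∈ Z, T z ∈ Z) →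
        (∀ z : ℝ, dist u (T z) = dist v z) →
        Metric.infDist u Z ≤ Metric.infDist v Z := by
      intro u v T hT hd
      conv_rhs => rw [Metric.infDist_eq_iInf]
      apply le_ciInf
      intro z
      calc Metric.infDist u Z ≤ dist u (T z) := Metric.infDist_le_dist_of_mem (hT z z.2)
        _ = dist v z := hd z
    intro x
    apply le_antisymm
    · exact key (x + 1) x (fun z => z + 1) hZshift
        (fun z => by rw [Real.dist_eq, Real.dist_eq]; congr 1; ring)
    · exact key x (x + 1) (fun z => z - 1) hZshift'
        (fun z => by rw [Real.dist_eq, Real.dist_eq]; congr 1; ring)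
  have hφper : Function.Periodic φ 1 := by
    intro x
    simp only [φ, hinfper]
  have hφle : ∀ x, φ x ≤ 1 := by
    intro x
    simp only [φ]
    have := Metric.infDist_nonneg (x := x) (s := Z)
    rw [max_le_iff]
    constructor <;> linarith
  have hφone : ∀ x ∈ Z, φ x = 1 := by
    intro x hx
    simp only [φ, Metric.infDist_zero_of_mem hx]
    norm_num
  -- limits of trajectories
  have hlim := fun y => exists_limit hbc hL hbper hb0 hX0 hX y
  choose ℓf hℓ0 hℓten using hlim
  -- invariance at integer times and dominated convergence
  have hmeasX : ∀ n : ℕ, AEStronglyMeasurable (fun y => φ (X n y)) μ := by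
    intro n
    exact (hφc.measurable.comp (flow_mono hL hX0 hX (n : ℝ)).measurable).aestronglyMeasurable
  have hbound : ∀ n : ℕ, ∀ᵐ y ∂μ, ‖φ (X (n : ℝ) y)‖ ≤ 1 := by
    intro n
    apply ae_of_all
    intro y
    rw [Real.norm_eq_abs, abs_le]
    exact ⟨by have := le_max_left (0:ℝ) (1 - Metric.infDist (X (n:ℝ) y) Z); simp only [φ]; linarith,
      hφle _⟩
  have hptws : ∀ᵐ y ∂μ, Tendsto (fun n : ℕ => φ (X (n : ℝ) y)) atTop (𝓝 (φ (ℓf y))) := by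
    apply ae_of_all
    intro y
    exact ((hφc.tendsto _).comp (hℓten y)).comp tendsto_natCast_atTop_atTop
  have hDCT := tendsto_integral_of_dominated_convergence (F := fun (n : ℕ) y => φ (X (n : ℝ) y))
    (f := fun y => φ (ℓf y)) (bound := fun _ => 1) hmeasX (integrable_const 1) hbound hptws
  have hconst : ∀ n : ℕ, ∫ y, φ (X (n : ℝ) y) ∂μ = ∫ y, φ y ∂μ := fun n =>
    hinv (n : ℝ) φ hφc hφper
  have hlim1 : ∫ y, φ (ℓf y) ∂μ = 1 := by
    have : (fun y => φ (ℓf y)) = fun _ => 1 := funext fun y => hφone _ (hℓ0 y)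
    rw [this]
    simp
  have hφint : ∫ y, φ y ∂μ = 1 := by
    have h2 : Tendsto (fun _ : ℕ => ∫ y, φ y ∂μ) atTop (𝓝 (∫ y, φ (ℓf y) ∂μ)) := by
      have := hDCT
      simp only [hconst] at this
      exact this
    have h3 := tendsto_nhds_unique h2 tendsto_const_nhds
    rw [← h3, hlim1]
  -- conclude φ = 1 a.e., so μ Zᶜ = 0
  have hφintgr : Integrable φ μ := by
    refine ⟨hφc.aestronglyMeasurable, ?_⟩
    apply HasFiniteIntegral.of_bounded (C := 1)
    apply ae_of_all
    intro y
    rw [Real.norm_eq_abs, abs_le]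
    exact ⟨by have := le_max_left (0:ℝ) (1 - Metric.infDist y Z); simp only [φ]; linarith, hφle _⟩
  have hzero : ∫ y, (1 - φ y) ∂μ = 0 := by
    rw [integral_sub (integrable_const 1) hφintgr, hφint]
    simp
  have hnn : (0 : ℝ → ℝ) ≤ fun y => 1 - φ y := by
    intro y
    simp only [Pi.zero_apply]
    linarith [hφle y]
  have hintg1φ : Integrable (fun y => 1 - φ y) μ := (integrable_const 1).sub hφintgr
  have hae : (fun y => 1 - φ y) =ᵐ[μ] 0 :=
    (integral_eq_zero_iff_of_nonneg hnn hintg1φ).mp hzero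
  have hnull : μ {y : ℝ | b y ≠ 0} = 0 := by
    have h1 : μ {y : ℝ | ¬ (1 - φ y = 0)} = 0 := by
      have := hae
      rw [Filter.EventuallyEq, ae_iff] at this
      simpa using this
    apply measure_mono_null _ h1
    intro y hy
    simp only [Set.mem_setOf_eq] at hy ⊢
    have hyZ : y ∉ Z := hy
    have hpos : 0 < Metric.infDist y Z := (hZc.notMem_iff_infDist_pos hZne).mp hyZ
    have : φ y < 1 := by
      simp only [φ]
      rw [max_lt_iff]
      constructor <;> linarith
    intro hcontra
    linarith
  rw [Measure.restrict_eq_zero.mpr hnull]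
  simp


end
end

section
/- Let a : ℝ^d → ℝ be a nonnegative C¹ ℤ^d-periodic function and ξ ∈ ℝ^d with |ξ| = 1 such that Tξ ∈ ℤ^d for some T > 0. Let X(t,x) be the flow of b = a ξ, and let Π_{ξ⊥} denote the orthogonal projection onto the hyperplane ξ⊥. Then for every x ∈ ℝ^d, X(t,x)/t → a*(x) ξ as t → ∞, where a*(x) = ((1/T) ∫₀^T ds / a(sξ + Π_{ξ⊥}(x)))⁻¹ if a(uξ + Π_{ξ⊥}(x)) ≠ 0 for all u ∈ ℝ, and a*(x) = 0 if a(uξ + Π_{ξ⊥}(x)) = 0 for some u ∈ ℝ. -/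
open MeasureTheory Filter Topology
open scoped RealInnerProductSpace

noncomputable section
open Set intervalIntegral

lemma periodic_deriv' {T : ℝ} {g : ℝ → ℝ} (hg : ContDiff ℝ 1 g)
    (hper : Function.Periodic g T) : Function.Periodic (deriv g) T := by
  intro x
  have h1 : HasDerivAt g (deriv g (x + T)) (x + T) :=
    (hg.differentiable one_ne_zero (x + T)).hasDerivAt
  have h2 : HasDerivAt (fun y => g (y + T)) (deriv g (x + T)) x := by
    simpa using h1.comp_add_const x T
  have h3 : HasDerivAt g (deriv g (x + T)) x := by
    have : (fun y => g (y + T)) = g := funext fun y => hper y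
    rwa [this] at h2
  exact h3.deriv.symm

lemma oneD_zero {T : ℝ} (g : ℝ → ℝ) (hg : ContDiff ℝ 1 g) (hper : Function.Periodic g T)
    (hT : 0 < T) (hnn : ∀ u, 0 ≤ g u) (u₁ : ℝ) (hu₁ : g u₁ = 0)
    (v : ℝ → ℝ) (hv : ∀ t, HasDerivAt v (g (v t)) t) :
    Tendsto (fun t => v t / t) atTop (𝓝 0) := by
  have hvd : Differentiable ℝ v := fun t => (hv t).differentiableAt
  have hmono : Monotone v := by
    apply monotone_of_deriv_nonneg hvd
    intro t; rw [(hv t).deriv]; exact hnn _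
  -- a zero u₀ ≥ v 0
  obtain ⟨n, hn⟩ := exists_nat_ge ((v 0 - u₁) / T)
  set u₀ := u₁ + n * T with hu₀def
  have hu₀ : g u₀ = 0 := by rw [hu₀def, hper.nat_mul n u₁, hu₁]
  have hcu : v 0 ≤ u₀ := by
    have := (div_le_iff₀ hT).mp hn
    linarith
  -- global Lipschitz constant for g
  have hdgc : Continuous (deriv g) := hg.continuous_deriv le_rfl
  have hdgper : Function.Periodic (deriv g) T := periodic_deriv' hg hper
  obtain ⟨C, hC⟩ : ∃ C : ℝ, ∀ y, ‖deriv g y‖ ≤ C := by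
    obtain ⟨z, -, hz⟩ := isCompact_Icc.exists_isMaxOn (s := Icc (0:ℝ) T)
      (nonempty_Icc.2 hT.le) (continuous_norm.comp hdgc).continuousOn
    refine ⟨‖deriv g z‖, fun y => ?_⟩
    obtain ⟨y', hy', hyy'⟩ := hdgper.exists_mem_Ico₀ hT y
    rw [hyy']
    exact hz (Ico_subset_Icc_self hy')
  have hK : LipschitzWith C.toNNReal g := by
    apply lipschitzWith_of_nnnorm_deriv_le (hg.differentiable one_ne_zero)
    intro x
    have := hC x
    rw [← norm_toNNReal]
    exact Real.toNNReal_mono (hC x)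
  -- v stays below u₀
  have hbd : ∀ t, 0 ≤ t → v t ≤ u₀ := by
    intro t₁ ht₁
    by_contra hgt
    push_neg at hgt
    obtain ⟨t₀, ht₀mem, ht₀⟩ := intermediate_value_Icc ht₁ (hvd.continuous.continuousOn)
      (⟨hcu, hgt.le⟩ : u₀ ∈ Icc (v 0) (v t₁))
    have heq : EqOn v (fun _ => u₀) (Icc t₀ t₁) := by
      apply ODE_solution_unique (v := fun _ y => g y) (fun _ => hK)
        hvd.continuous.continuousOn
        (fun t _ => (hv t).hasDerivWithinAt)
        continuousOn_const
        (fun t _ => by simpa [hu₀] using (hasDerivWithinAt_const t (Ici t) u₀))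
        ht₀
    have := heq (right_mem_Icc.2 ht₀mem.2)
    simp only at this
    exact absurd this (ne_of_gt hgt)
  -- squeeze
  have hB : ∀ t, 0 ≤ t → |v t| ≤ max |v 0| |u₀| := by
    intro t ht
    rw [abs_le]
    refine ⟨?_, (hbd t ht).trans ((le_abs_self _).trans (le_max_right _ _))⟩
    have h1 : -|v 0| ≤ v 0 := neg_abs_le _
    have h2 : v 0 ≤ v t := hmono ht
    have h3 : |v 0| ≤ max |v 0| |u₀| := le_max_left _ _
    linarith
  have : Tendsto (fun t : ℝ => max |v 0| |u₀| * t⁻¹) atTop (𝓝 0) := by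
    simpa using tendsto_inv_atTop_zero.const_mul (max |v 0| |u₀|)
  apply squeeze_zero_norm' _ this
  filter_upwards [eventually_ge_atTop (1:ℝ)] with t ht
  have ht0 : (0:ℝ) < t := lt_of_lt_of_le one_pos ht
  rw [Real.norm_eq_abs, abs_div, abs_of_pos ht0, div_eq_mul_inv]
  exact mul_le_mul_of_nonneg_right (hB t ht0.le) (inv_nonneg.2 ht0.le)

lemma oneD_pos {T : ℝ} (g : ℝ → ℝ) (hg : Continuous g) (hper : Function.Periodic g T)
    (hT : 0 < T) (hpos : ∀ u, 0 < g u)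
    (v : ℝ → ℝ) (hv : ∀ t, HasDerivAt v (g (v t)) t) :
    Tendsto (fun t => v t / t) atTop (𝓝 ((T⁻¹ * ∫ s in (0:ℝ)..T, (g s)⁻¹)⁻¹)) := by
  set c := v 0 with hc
  set G : ℝ → ℝ := fun u => (g u)⁻¹ with hG
  have hGc : Continuous G := hg.inv₀ fun u => (hpos u).ne'
  have hGpos : ∀ u, 0 < G u := fun u => inv_pos.2 (hpos u)
  have hGper : Function.Periodic G T := fun u => by simp only [hG, hper u]
  have hGint : ∀ t₁ t₂ : ℝ, IntervalIntegrable G MeasureTheory.volume t₁ t₂ :=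
    fun t₁ t₂ => hGc.intervalIntegrable _ _
  set J := ∫ s in (0:ℝ)..T, G s with hJ
  have hJpos : 0 < J := intervalIntegral_pos_of_pos (hGint 0 T) hGpos hT
  -- lower bound m for g
  obtain ⟨z, -, hz⟩ := isCompact_Icc.exists_isMinOn (s := Icc (0:ℝ) T)
    (nonempty_Icc.2 hT.le) hg.continuousOn
  set m := g z with hm
  have hmpos : 0 < m := hpos z
  have hmle : ∀ u, m ≤ g u := by
    intro u
    obtain ⟨u', hu', huu'⟩ := hper.exists_mem_Ico₀ hT u
    rw [huu']
    exact hz (Ico_subset_Icc_self hu')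
  set F : ℝ → ℝ := fun w => ∫ s in c..w, G s with hF
  have hF' : ∀ w, HasDerivAt F (G w) w := fun w =>
    integral_hasDerivAt_right (hGint c w)
      (hGc.aestronglyMeasurable.stronglyMeasurableAtFilter) hGc.continuousAt
  have hFv : ∀ t, F (v t) = t := by
    intro t
    have hh : ∀ s, HasDerivAt (fun t => F (v t) - t) 0 s := by
      intro s
      have h1 : HasDerivAt (fun t => F (v t)) (G (v s) * g (v s)) s :=
        (hF' (v s)).comp s (hv s)
      have h2 : G (v s) * g (v s) = 1 := inv_mul_cancel₀ (hpos (v s)).ne'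
      have := h1.sub (hasDerivAt_id s)
      rw [h2] at this
      simpa [Pi.sub_def] using this
    have hconst : ∀ s : ℝ, F (v s) - s = F (v 0) - 0 := by
      intro s
      exact is_const_of_deriv_eq_zero (fun u => (hh u).differentiableAt)
        (fun u => (hh u).deriv) s 0
    have h0 : F (v 0) = 0 := by simp [hF, ← hc]
    have := hconst t
    rw [h0] at this
    linarith
  have hFd : Differentiable ℝ F := fun w => (hF' w).differentiableAt
  have hFmono : Monotone F :=
    monotone_of_deriv_nonneg hFd fun w => by rw [(hF' w).deriv]; exact (hGpos w).le
  -- F (c + n*T) = n * J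
  have hFn : ∀ n : ℕ, F (c + n * T) = n * J := by
    intro n
    have h1 : F (c + n * T) = ∫ s in c..c + (n:ℤ) • T, G s := by
      push_cast [hF]; norm_num
    rw [h1, hGper.intervalIntegral_add_zsmul_eq (n:ℤ) c hGint,
      hGper.intervalIntegral_add_eq c 0]
    norm_num [zsmul_eq_mul, hJ]
  -- |F w - (w - c) * (J/T)| ≤ J for w ≥ c
  have hFb : ∀ w, c ≤ w → |F w - (w - c) * (J / T)| ≤ J := by
    intro w hw
    set n := ⌊(w - c) / T⌋₊ with hn
    have h0 : (0:ℝ) ≤ (w - c)/T := div_nonneg (by linarith) hT.le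
    have h1 : (n:ℝ) ≤ (w - c)/T := Nat.floor_le h0
    have h2 : (w - c)/T < n + 1 := Nat.lt_floor_add_one _
    have h3 : c + n * T ≤ w := by
      have := (le_div_iff₀ hT).mp h1; linarith
    have h4 : w ≤ c + (n + 1) * T := by
      have := (div_lt_iff₀ hT).mp h2; nlinarith
    have h5 : (n:ℝ) * J ≤ F w := by rw [← hFn n]; exact hFmono h3
    have h6 : F w ≤ ((n:ℝ) + 1) * J := by
      have hh := hFn (n + 1)
      push_cast at hh
      calc F w ≤ F (c + ((n:ℝ) + 1) * T) := hFmono h4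
        _ = ((n:ℝ) + 1) * J := hh
    have h7 : (n:ℝ) * J ≤ (w - c) * (J / T) := by
      calc (n:ℝ) * J ≤ ((w-c)/T) * J := mul_le_mul_of_nonneg_right h1 hJpos.le
        _ = (w - c) * (J / T) := by ring
    have h8 : (w - c) * (J / T) ≤ ((n:ℝ) + 1) * J := by
      calc (w - c) * (J / T) = ((w-c)/T) * J := by ring
        _ ≤ ((n:ℝ) + 1) * J := mul_le_mul_of_nonneg_right h2.le hJpos.le
    rw [abs_le]
    constructor <;> nlinarith
  -- v t → ∞
  have hlow : ∀ t, 0 ≤ t → c + m * t ≤ v t := by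
    intro t ht
    have hφ : Monotone (fun t => v t - m * t) := by
      apply monotone_of_deriv_nonneg
      · intro s
        have hd : HasDerivAt (fun t => v t - m * t) (g (v s) - m) s := by
          simpa [Pi.sub_def] using (hv s).sub ((hasDerivAt_id s).const_mul m)
        exact hd.differentiableAt
      · intro s
        have hd : HasDerivAt (fun t => v t - m * t) (g (v s) - m) s := by
          simpa [Pi.sub_def] using (hv s).sub ((hasDerivAt_id s).const_mul m)
        rw [hd.deriv, sub_nonneg]
        exact hmle _
    have := hφ ht
    simp only [mul_zero, sub_zero] at this
    linarith
  have hvtop : Tendsto v atTop atTop := by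
    apply tendsto_atTop_mono' _ _ (tendsto_atTop_add_const_left atTop c
      (tendsto_id.const_mul_atTop hmpos))
    filter_upwards [eventually_ge_atTop (0:ℝ)] with t ht using hlow t ht
  -- F w / w → J / T
  have hFtend : Tendsto (fun w => F w / w) atTop (𝓝 (J / T)) := by
    have hsplit : ∀ᶠ w in atTop, F w / w
        = (F w - (w - c) * (J/T)) / w + (J/T) - c * (J/T) / w := by
      filter_upwards [eventually_ge_atTop (max c 1)] with w hw
      have hw1 : (1:ℝ) ≤ w := le_trans (le_max_right _ _) hw
      have hw0 : w ≠ 0 := by linarith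
      field_simp
      ring
    have h1 : Tendsto (fun w : ℝ => (F w - (w - c) * (J/T)) / w) atTop (𝓝 0) := by
      apply squeeze_zero_norm' _ (by simpa using tendsto_inv_atTop_zero.const_mul J)
      filter_upwards [eventually_ge_atTop (max c 1)] with w hw
      have hwc : c ≤ w := le_trans (le_max_left _ _) hw
      have hw1 : (1:ℝ) ≤ w := le_trans (le_max_right _ _) hw
      have hw0 : (0:ℝ) < w := by linarith
      rw [Real.norm_eq_abs, abs_div, abs_of_pos hw0, div_eq_mul_inv]
      exact mul_le_mul_of_nonneg_right (hFb w hwc) (inv_nonneg.2 hw0.le)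
    have h2 : Tendsto (fun w : ℝ => c * (J/T) / w) atTop (𝓝 0) := by
      simpa [div_eq_mul_inv] using tendsto_inv_atTop_zero.const_mul (c * (J/T))
    have := (h1.add_const (J/T)).sub h2
    rw [zero_add, sub_zero] at this
    exact Tendsto.congr' (Filter.EventuallyEq.symm hsplit) this
  -- conclude
  have hne : J / T ≠ 0 := (div_pos hJpos hT).ne'
  have hcomp : Tendsto (fun t => F (v t) / v t) atTop (𝓝 (J / T)) := hFtend.comp hvtop
  have hfin : Tendsto (fun t => (F (v t) / v t)⁻¹) atTop (𝓝 ((J / T)⁻¹)) :=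
    hcomp.inv₀ hne
  have heq : (fun t => (F (v t) / v t)⁻¹) = fun t => v t / t := by
    funext t
    rw [inv_div, hFv t]
  rw [heq] at hfin
  have : (T⁻¹ * J)⁻¹ = (J / T)⁻¹ := by rw [div_eq_mul_inv, mul_comm]
  rw [this]
  exact hfin

/-- Asymptotics of the flow of `b = a ξ` with `a ≥ 0` `C¹` `ℤ^d`-periodic and `ξ` a unit
vector with `Tξ ∈ ℤ^d` for some `T > 0`: `X(t,x)/t → a*(x) ξ`, where `a*(x)` is the
harmonic mean of `s ↦ a(sξ + Π_{ξ⊥}(x))` over a period if `a` does not vanish on the line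
`{uξ + Π_{ξ⊥}(x)}`, and `a*(x) = 0` otherwise. Here `Π_{ξ⊥}(x) = x - (x·ξ)ξ`. -/
theorem stmt16 (d : ℕ) (a : EuclideanSpace ℝ (Fin d) → ℝ)
    (ha : ContDiff ℝ 1 a) (haper : IsZdPeriodic d a) (hapos : ∀ y, 0 ≤ a y)
    (ξ : EuclideanSpace ℝ (Fin d)) (hξ : ‖ξ‖ = 1)
    (T : ℝ) (hT : 0 < T) (k₀ : Fin d → ℤ) (hTξ : T • ξ = intVec d k₀)
    (X : ℝ → EuclideanSpace ℝ (Fin d) → EuclideanSpace ℝ (Fin d))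
    (hX0 : ∀ x, X 0 x = x)
    (hX : ∀ x t, HasDerivAt (fun s => X s x) (a (X t x) • ξ) t) :
    ∀ x : EuclideanSpace ℝ (Fin d),
      ((∀ u : ℝ, a (u • ξ + (x - (⟪x, ξ⟫ : ℝ) • ξ)) ≠ 0) →
        Tendsto (fun t : ℝ => t⁻¹ • X t x) atTop
          (𝓝 ((T⁻¹ * ∫ s in (0 : ℝ)..T, (a (s • ξ + (x - (⟪x, ξ⟫ : ℝ) • ξ)))⁻¹)⁻¹ • ξ))) ∧
      ((∃ u : ℝ, a (u • ξ + (x - (⟪x, ξ⟫ : ℝ) • ξ)) = 0) →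
        Tendsto (fun t : ℝ => t⁻¹ • X t x) atTop (𝓝 0)) := by
  intro x
  have hξξ : (⟪ξ, ξ⟫ : ℝ) = 1 := by
    rw [real_inner_self_eq_norm_mul_norm, hξ, one_mul]
  set g : ℝ → ℝ := fun u => a (u • ξ + (x - (⟪x, ξ⟫ : ℝ) • ξ)) with hgdef
  set c : ℝ := ⟪x, ξ⟫ with hcdef
  set v : ℝ → ℝ := fun t => ⟪X t x, ξ⟫ with hvdef
  -- derivative of v
  have hvd' : ∀ t, HasDerivAt v (a (X t x)) t := by
    intro t
    have h := HasDerivAt.inner ℝ (hX x t) (hasDerivAt_const t ξ)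
    simpa only [inner_zero_right, zero_add, real_inner_smul_left, hξξ, mul_one] using h
  -- X t x = (x - c • ξ) + v t • ξ
  have hv0 : v 0 = c := by simp only [hvdef, hX0 x, ← hcdef]
  have hXeq : ∀ t, X t x = (x - c • ξ) + v t • ξ := by
    intro t
    have hY : ∀ s, HasDerivAt (fun t => X t x - v t • ξ) 0 s := by
      intro s
      have := (hX x s).sub ((hvd' s).smul_const ξ)
      simpa only [sub_self, Pi.sub_def] using this
    have hconst : X t x - v t • ξ = X 0 x - v 0 • ξ :=
      is_const_of_deriv_eq_zero (fun u => (hY u).differentiableAt)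
        (fun u => (hY u).deriv) t 0
    rw [hX0 x, hv0, sub_eq_iff_eq_add] at hconst
    rw [hconst]
  -- v solves v' = g v
  have hgv : ∀ t, g (v t) = a (X t x) := by
    intro t
    simp only [hgdef]
    rw [hXeq t, add_comm]
  have hvd : ∀ t, HasDerivAt v (g (v t)) t := fun t => (hgv t) ▸ hvd' t
  -- g is C¹ and periodic
  have hgC1 : ContDiff ℝ 1 g := by
    apply ha.comp
    exact (contDiff_id.smul contDiff_const).add contDiff_const
  have hgper : Function.Periodic g T := by
    intro u
    have h1 : (u + T) • ξ + (x - c • ξ) = (u • ξ + (x - c • ξ)) + T • ξ := by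
      rw [add_smul]; abel
    rw [hgdef]
    simp only
    rw [h1, hTξ, haper]
  constructor
  · intro hne
    have hpos : ∀ u, 0 < g u := fun u => lt_of_le_of_ne (hapos _) (Ne.symm (hne u))
    have lim1 := oneD_pos g hgC1.continuous hgper hT hpos v hvd
    have key : ∀ t : ℝ, t⁻¹ • X t x = t⁻¹ • (x - c • ξ) + (v t / t) • ξ := by
      intro t
      rw [hXeq t, smul_add, smul_smul, mul_comm, ← div_eq_mul_inv]
    have h1 : Tendsto (fun t : ℝ => t⁻¹ • (x - c • ξ)) atTop (𝓝 0) := by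
      have h := (tendsto_inv_atTop_zero : Tendsto (fun t : ℝ => t⁻¹) atTop (𝓝 (0:ℝ))).smul_const (x - c • ξ)
      rwa [zero_smul] at h
    have h2 : Tendsto (fun t => (v t / t) • ξ) atTop
        (𝓝 (((T⁻¹ * ∫ s in (0:ℝ)..T, (g s)⁻¹)⁻¹ : ℝ) • ξ)) := lim1.smul_const ξ
    have := h1.add h2
    rw [zero_add] at this
    exact Tendsto.congr (fun t => (key t).symm) this
  · intro ⟨u₁, hu₁⟩
    have lim0 := oneD_zero g hgC1 hgper hT (fun u => hapos _) u₁ hu₁ v hvd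
    have key : ∀ t : ℝ, t⁻¹ • X t x = t⁻¹ • (x - c • ξ) + (v t / t) • ξ := by
      intro t
      rw [hXeq t, smul_add, smul_smul, mul_comm, ← div_eq_mul_inv]
    have h1 : Tendsto (fun t : ℝ => t⁻¹ • (x - c • ξ)) atTop (𝓝 0) := by
      have h := (tendsto_inv_atTop_zero : Tendsto (fun t : ℝ => t⁻¹) atTop (𝓝 (0:ℝ))).smul_const (x - c • ξ)
      rwa [zero_smul] at h
    have h2 : Tendsto (fun t => (v t / t) • ξ) atTop (𝓝 ((0:ℝ) • ξ)) := lim0.smul_const ξ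
    rw [zero_smul] at h2
    have := h1.add h2
    rw [zero_add] at this
    exact Tendsto.congr (fun t => (key t).symm) this
end
end

section
/- Let A : ℝ^d → ℝ^{d×d} be a C¹ ℤ^d-periodic matrix-valued function with A(y) symmetric and positive semidefinite for every y, let v : ℝ^d → ℝ be a C² ℤ^d-periodic function, and let b := A∇v with flow X(t,x). Then for every x ∈ ℝ^d, X(t,x)/t → 0 as t → ∞. -/
open MeasureTheory Filter Topology
open scoped RealInnerProductSpace

noncomputable section

/-! ### Auxiliary lemmas -/

open Matrix

/-- The identity map from plain vectors to Euclidean space. -/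
def toE {d : ℕ} (u : Fin d → ℝ) : EuclideanSpace ℝ (Fin d) := WithLp.toLp 2 u

lemma euclid_norm_sq {d : ℕ} (x : EuclideanSpace ℝ (Fin d)) : ‖x‖^2 = ∑ i, (x i)^2 := by
  rw [EuclideanSpace.norm_eq, Real.sq_sqrt (by positivity)]
  simp [Real.norm_eq_abs, sq_abs]

lemma dot_eq_inner {d : ℕ} (a b : Fin d → ℝ) : a ⬝ᵥ b = ⟪toE a, toE b⟫ := by
  simp [PiLp.inner_apply, dotProduct, toE, mul_comm]

lemma dot_self_eq {d : ℕ} (a : Fin d → ℝ) : a ⬝ᵥ a = ‖toE a‖^2 := by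
  rw [euclid_norm_sq]; simp [dotProduct, toE, sq]

lemma symm_dot {d : ℕ} {M : Matrix (Fin d) (Fin d) ℝ} (h : M.IsSymm) (u w : Fin d → ℝ) :
    u ⬝ᵥ M.mulVec w = w ⬝ᵥ M.mulVec u := by
  rw [Matrix.dotProduct_mulVec, ← Matrix.mulVec_transpose, h.eq, dotProduct_comm]

lemma mulVec_norm_bound {d : ℕ} (M : Matrix (Fin d) (Fin d) ℝ) (c : ℝ) (hc : 0 ≤ c)
    (hM : ∀ i j, |M i j| ≤ c) (u : Fin d → ℝ) :
    ‖toE (M.mulVec u)‖ ≤ (d * c) * ‖toE u‖ := by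
  have hnn : (0:ℝ) ≤ d * c * ‖toE u‖ := by positivity
  have hS : ∑ j, (u j)^2 = ‖toE u‖^2 := by rw [euclid_norm_sq]; rfl
  have hrow : ∀ i, ((M.mulVec u) i)^2 ≤ (d * c^2) * ∑ j, (u j)^2 := by
    intro i
    have happ : (M.mulVec u) i = ∑ j, M i j * u j := by
      simp [Matrix.mulVec, dotProduct]
    have h1 : (∑ j, M i j * u j)^2 ≤ (∑ j, (M i j)^2) * ∑ j, (u j)^2 :=
      Finset.sum_mul_sq_le_sq_mul_sq _ _ _
    have h2 : (∑ j, (M i j)^2) ≤ ∑ _j : Fin d, c^2 := by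
      apply Finset.sum_le_sum
      intro j _
      calc (M i j)^2 = |M i j|^2 := (sq_abs _).symm
        _ ≤ c^2 := by nlinarith [hM i j, abs_nonneg (M i j)]
    have h3 : (∑ _j : Fin d, c^2 : ℝ) = d * c^2 := by simp [mul_comm]
    have h4 : (0:ℝ) ≤ ∑ j, (u j)^2 := by positivity
    rw [happ]
    nlinarith
  have hb : ∑ i, ((M.mulVec u) i)^2 ≤ (d * c * ‖toE u‖)^2 := by
    calc ∑ i, ((M.mulVec u) i)^2 ≤ ∑ _i : Fin d, (d * c^2) * ∑ j, (u j)^2 :=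
          Finset.sum_le_sum fun i _ => hrow i
      _ = (d:ℝ) * ((d * c^2) * ∑ j, (u j)^2) := by simp [mul_comm]
      _ = (d * c * ‖toE u‖)^2 := by rw [hS]; ring
  calc ‖toE (M.mulVec u)‖
      = Real.sqrt (∑ i, ((M.mulVec u) i)^2) := by
        rw [EuclideanSpace.norm_eq]
        congr 1
        apply Finset.sum_congr rfl
        intro i _
        simp [toE, Real.norm_eq_abs, sq_abs]
    _ ≤ Real.sqrt ((d * c * ‖toE u‖)^2) := Real.sqrt_le_sqrt hb
    _ = d * c * ‖toE u‖ := Real.sqrt_sq hnn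

lemma psd_cauchy_schwarz {d : ℕ} {M : Matrix (Fin d) (Fin d) ℝ} (hsym : M.IsSymm)
    (hpsd : M.PosSemidef) (w u : Fin d → ℝ) :
    (w ⬝ᵥ M.mulVec u)^2 ≤ (w ⬝ᵥ M.mulVec w) * (u ⬝ᵥ M.mulVec u) := by
  have key : ∀ t : ℝ, 0 ≤ (u ⬝ᵥ M.mulVec u) * (t*t) + (2 * (w ⬝ᵥ M.mulVec u)) * t
      + (w ⬝ᵥ M.mulVec w) := by
    intro t
    have h0 : (0:ℝ) ≤ (w + t • u) ⬝ᵥ M.mulVec (w + t • u) := by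
      have := hpsd.dotProduct_mulVec_nonneg (w + t • u); simpa using this
    have hexp : (w + t • u) ⬝ᵥ M.mulVec (w + t • u) =
        (u ⬝ᵥ M.mulVec u) * (t*t) + (2 * (w ⬝ᵥ M.mulVec u)) * t + (w ⬝ᵥ M.mulVec w) := by
      rw [Matrix.mulVec_add, Matrix.mulVec_smul, add_dotProduct, smul_dotProduct,
        dotProduct_add, dotProduct_add, dotProduct_smul,
        dotProduct_smul, symm_dot hsym u w]
      simp only [smul_eq_mul]
      ring
    linarith [hexp ▸ h0]
  have hd := discrim_le_zero key
  rw [discrim] at hd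
  nlinarith

lemma psd_norm_bound {d : ℕ} {M : Matrix (Fin d) (Fin d) ℝ} (hsym : M.IsSymm)
    (hpsd : M.PosSemidef) (K : ℝ) (hK : 0 ≤ K)
    (hop : ∀ z : Fin d → ℝ, ‖toE (M.mulVec z)‖ ≤ K * ‖toE z‖)
    (w : Fin d → ℝ) :
    ‖toE (M.mulVec w)‖^2 ≤ K * (w ⬝ᵥ M.mulVec w) := by
  set u : Fin d → ℝ := M.mulVec w with hu
  set n : ℝ := ‖toE u‖ with hn
  have hn0 : 0 ≤ n := norm_nonneg _
  have hBww : 0 ≤ w ⬝ᵥ M.mulVec w := by have := hpsd.dotProduct_mulVec_nonneg w; simpa using this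
  have h1 : n^2 = w ⬝ᵥ M.mulVec u := by
    rw [← dot_self_eq, hu, symm_dot hsym]
  have h2 : (w ⬝ᵥ M.mulVec u)^2 ≤ (w ⬝ᵥ M.mulVec w) * (u ⬝ᵥ M.mulVec u) :=
    psd_cauchy_schwarz hsym hpsd w u
  have h3 : u ⬝ᵥ M.mulVec u ≤ K * n^2 := by
    have hcs : u ⬝ᵥ M.mulVec u ≤ n * ‖toE (M.mulVec u)‖ := by
      rw [dot_eq_inner]
      exact real_inner_le_norm _ _
    have := hop u
    nlinarith
  have h4 : n^4 ≤ (w ⬝ᵥ M.mulVec w) * (K * n^2) := by nlinarith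
  rcases eq_or_lt_of_le hn0 with h | h
  · have : n^2 = 0 := by rw [← h]; ring
    rw [this]; positivity
  · nlinarith [mul_pos h h]

lemma periodic_bounded {d : ℕ} (f : EuclideanSpace ℝ (Fin d) → ℝ) (hf : Continuous f)
    (hper : IsZdPeriodic d f) : ∃ C : ℝ, 0 ≤ C ∧ ∀ x, |f x| ≤ C := by
  set cube : Set (EuclideanSpace ℝ (Fin d)) := {x | ∀ i, x i ∈ Set.Icc (0:ℝ) 1} with hcube
  have hcomp : IsCompact cube := by
    have : cube = (⇑(EuclideanSpace.equiv (Fin d) ℝ).symm) ''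
        (Set.pi Set.univ fun _ => Set.Icc (0:ℝ) 1) := by
      ext x
      constructor
      · intro hx
        exact ⟨fun i => x i, fun i _ => hx i, rfl⟩
      · rintro ⟨y, hy, rfl⟩ i
        exact hy i (Set.mem_univ i)
    rw [this]
    exact ((isCompact_univ_pi fun _ => isCompact_Icc).image
      (EuclideanSpace.equiv (Fin d) ℝ).symm.continuous)
  obtain ⟨C, hC⟩ := (hcomp.image (continuous_abs.comp hf)).bddAbove
  refine ⟨max C 0, le_max_right _ _, fun x => ?_⟩
  have key : ∀ x ∈ cube, |f x| ≤ C := fun y hy => hC ⟨y, hy, rfl⟩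
  set k : Fin d → ℤ := fun i => -⌊x i⌋ with hk
  have hxk : (x + intVec d k) ∈ cube := by
    intro i
    have : (x + intVec d k) i = Int.fract (x i) := by
      rw [PiLp.add_apply]
      show x i + ((-⌊x i⌋ : ℤ) : ℝ) = _
      rw [Int.fract]
      push_cast
      ring
    rw [this]
    exact ⟨Int.fract_nonneg _, le_of_lt (Int.fract_lt_one _)⟩
  have := key _ hxk
  rw [hper x k] at this
  exact le_trans this (le_max_left _ _)

/-- For a current field `b = A∇v`, where `A` is a `C¹` `ℤ^d`-periodic symmetric positive
semidefinite matrix-valued function and `v` is a `C²` `ℤ^d`-periodic potential, the flow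
satisfies `X(t,x)/t → 0` as `t → ∞` for every `x`. -/
theorem stmt19 (d : ℕ) (A : EuclideanSpace ℝ (Fin d) → Matrix (Fin d) (Fin d) ℝ)
    (hA : ∀ i j, ContDiff ℝ 1 (fun y => A y i j)) (hAper : IsZdPeriodic d A)
    (hAsymm : ∀ y, (A y).IsSymm) (hApsd : ∀ y, (A y).PosSemidef)
    (v : EuclideanSpace ℝ (Fin d) → ℝ) (hv : ContDiff ℝ 2 v) (hvper : IsZdPeriodic d v)
    (X : ℝ → EuclideanSpace ℝ (Fin d) → EuclideanSpace ℝ (Fin d))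
    (hX0 : ∀ x, X 0 x = x)
    (hX : ∀ x t, HasDerivAt (fun s => X s x)
      ((WithLp.toLp 2 ((A (X t x)).mulVec (fun j => gradient v (X t x) j)) : EuclideanSpace ℝ (Fin d))) t) :
    ∀ x : EuclideanSpace ℝ (Fin d),
      Tendsto (fun t : ℝ => t⁻¹ • X t x) atTop (𝓝 0) := by
  intro x
  -- basic continuity facts
  have hwcont : Continuous (gradient v) := by
    have hgr : gradient v = fun z => (InnerProductSpace.toDual ℝ _).symm (fderiv ℝ v z) := rfl
    rw [hgr]
    exact (InnerProductSpace.toDual ℝ _).symm.continuous.comp (hv.continuous_fderiv two_ne_zero)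
  set w : EuclideanSpace ℝ (Fin d) → (Fin d → ℝ) := fun z j => gradient v z j with hwdef
  set bb : EuclideanSpace ℝ (Fin d) → EuclideanSpace ℝ (Fin d) :=
    fun z => toE ((A z).mulVec (w z)) with hbbdef
  set hh : EuclideanSpace ℝ (Fin d) → ℝ := fun z => (w z) ⬝ᵥ (A z).mulVec (w z) with hhdef
  have hhinner : ∀ z, hh z = ⟪gradient v z, bb z⟫ := fun z => dot_eq_inner _ _
  have hh0 : ∀ z, 0 ≤ hh z := by
    intro z
    have := (hApsd z).dotProduct_mulVec_nonneg (w z)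
    simpa using this
  -- continuity of bb and hh
  have hbvcont : Continuous fun z => (A z).mulVec (w z) := by
    have : (fun z => (A z).mulVec (w z)) = fun z i => ∑ j, A z i j * gradient v z j := by
      funext z i
      simp [Matrix.mulVec, dotProduct, hwdef]
    rw [this]
    refine continuous_pi fun i => continuous_finset_sum _ fun j _ => ?_
    exact ((hA i j).continuous).mul ((continuous_apply j).comp
      ((EuclideanSpace.equiv (Fin d) ℝ).continuous.comp hwcont))
  have hbbcont : Continuous bb :=
    (EuclideanSpace.equiv (Fin d) ℝ).symm.continuous.comp hbvcont
  have hhcont : Continuous hh := by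
    have : hh = fun z => ⟪gradient v z, bb z⟫ := funext hhinner
    rw [this]
    exact hwcont.inner hbbcont
  have hXc : Continuous fun s => X s x :=
    continuous_iff_continuousAt.mpr fun t => (hX x t).continuousAt
  -- derivative of t ↦ v (X t x)
  have hg : ∀ t : ℝ, HasDerivAt (fun s => v (X s x)) (hh (X t x)) t := by
    intro t
    have hF := hasGradientAt_iff_hasFDerivAt.mp
      ((hv.differentiable two_ne_zero) (X t x)).hasGradientAt
    have hcomp := hF.comp_hasDerivAt t (hX x t)
    have hval : (InnerProductSpace.toDual ℝ (EuclideanSpace ℝ (Fin d)))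
        (gradient v (X t x)) (bb (X t x)) = hh (X t x) := by
      rw [hhinner, InnerProductSpace.toDual_apply_apply]
    rw [← hval]
    exact hcomp
  -- constants
  obtain ⟨Mv, hMv0, hMv⟩ := periodic_bounded v hv.continuous hvper
  have hAijper : ∀ i j, IsZdPeriodic d (fun y => A y i j) := by
    intro i j y k
    show A (y + intVec d k) i j = A y i j
    rw [hAper y k]
  choose C hC0 hC using fun i j => periodic_bounded _ (hA i j).continuous (hAijper i j)
  set c : ℝ := ∑ i, ∑ j, C i j with hcdef
  have hc0 : 0 ≤ c := Finset.sum_nonneg fun i _ => Finset.sum_nonneg fun j _ => hC0 i j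
  have hce : ∀ (y : EuclideanSpace ℝ (Fin d)) i j, |A y i j| ≤ c := by
    intro y i j
    have s1 : C i j ≤ ∑ j', C i j' :=
      Finset.single_le_sum (fun j' _ => hC0 i j') (Finset.mem_univ j)
    have s2 : (∑ j', C i j') ≤ c :=
      Finset.single_le_sum (f := fun i' => ∑ j', C i' j')
        (fun i' _ => Finset.sum_nonneg fun j' _ => hC0 i' j') (Finset.mem_univ i)
    exact le_trans (hC i j y) (le_trans s1 s2)
  set K : ℝ := d * c with hKdef
  have hK0 : 0 ≤ K := by positivity
  have hop : ∀ (y : EuclideanSpace ℝ (Fin d)) (u : Fin d → ℝ),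
      ‖toE ((A y).mulVec u)‖ ≤ K * ‖toE u‖ :=
    fun y u => mulVec_norm_bound (A y) c hc0 (fun i j => hce y i j) u
  have hbbsq : ∀ z, ‖bb z‖^2 ≤ K * hh z :=
    fun z => psd_norm_bound (hAsymm z) (hApsd z) K hK0 (hop z) (w z)
  -- fundamental theorem of calculus
  have hint_h : ∀ t : ℝ, IntervalIntegrable (fun s => hh (X s x)) volume 0 t :=
    fun t => (hhcont.comp hXc).intervalIntegrable 0 t
  have hftc : ∀ t : ℝ, ∫ s in (0:ℝ)..t, hh (X s x) = v (X t x) - v x := by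
    intro t
    rw [intervalIntegral.integral_eq_sub_of_hasDerivAt (fun s _ => hg s) (hint_h t), hX0]
  have hIh : ∀ t : ℝ, ∫ s in (0:ℝ)..t, hh (X s x) ≤ 2 * Mv := by
    intro t
    rw [hftc]
    have h1 := abs_le.mp (hMv (X t x))
    have h2 := abs_le.mp (hMv x)
    linarith [h1.1, h1.2, h2.1, h2.2]
  have hXftc : ∀ t : ℝ, X t x - x = ∫ s in (0:ℝ)..t, bb (X s x) := by
    intro t
    rw [intervalIntegral.integral_eq_sub_of_hasDerivAt (f := fun s => X s x)
      (f' := fun s => bb (X s x)) (fun s _ => hX x s)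
      ((hbbcont.comp hXc).intervalIntegrable 0 t), hX0]
  -- the main estimate
  rw [NormedAddCommGroup.tendsto_nhds_zero]
  intro ε hε
  set δ : ℝ := ε / 2 with hδdef
  have hδ : 0 < δ := by positivity
  set C₂ : ℝ := (K / (2 * δ)) * (2 * Mv) with hC₂def
  have hC₂0 : 0 ≤ C₂ := by positivity
  set D : ℝ := ‖x‖ + C₂ with hDdef
  have hD0 : 0 ≤ D := by positivity
  -- pointwise bound on ‖bb‖
  have hpt : ∀ z, ‖bb z‖ ≤ δ/2 + (K/(2*δ)) * hh z := by
    intro z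
    have h1 := hbbsq z
    have h2 : ‖bb z‖ ≤ δ/2 + ‖bb z‖^2/(2*δ) := by
      have e : δ/2 + ‖bb z‖^2/(2*δ) = (δ^2 + ‖bb z‖^2)/(2*δ) := by
        field_simp
      rw [e, le_div_iff₀ (by positivity)]
      nlinarith [sq_nonneg (‖bb z‖ - δ)]
    have h3 : ‖bb z‖^2/(2*δ) ≤ (K/(2*δ)) * hh z := by
      rw [div_le_iff₀ (by positivity)]
      calc ‖bb z‖^2 ≤ K * hh z := h1
        _ = K / (2*δ) * hh z * (2*δ) := by field_simp
    linarith
  -- integral bound for t ≥ 0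
  have hIb : ∀ t : ℝ, 0 ≤ t → ‖X t x - x‖ ≤ δ/2 * t + C₂ := by
    intro t ht
    rw [hXftc t]
    calc ‖∫ s in (0:ℝ)..t, bb (X s x)‖ ≤ ∫ s in (0:ℝ)..t, ‖bb (X s x)‖ :=
          intervalIntegral.norm_integral_le_integral_norm ht
      _ ≤ ∫ s in (0:ℝ)..t, (δ/2 + (K/(2*δ)) * hh (X s x)) := by
          apply intervalIntegral.integral_mono_on ht
          · exact ((hbbcont.comp hXc).norm).intervalIntegrable 0 t
          · exact (continuous_const.add (continuous_const.mul
              (hhcont.comp hXc))).intervalIntegrable 0 t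
          · intro s _
            exact hpt (X s x)
      _ = δ/2 * t + (K/(2*δ)) * ∫ s in (0:ℝ)..t, hh (X s x) := by
          rw [intervalIntegral.integral_add (intervalIntegrable_const)
            ((hint_h t).const_mul _), intervalIntegral.integral_const_mul,
            intervalIntegral.integral_const]
          simp [smul_eq_mul, mul_comm]
      _ ≤ δ/2 * t + C₂ := by
          have := hIh t
          have hnn : 0 ≤ K/(2*δ) := by positivity
          rw [hC₂def]
          nlinarith
  -- conclusion
  filter_upwards [eventually_ge_atTop (max 1 (4*(D+1)/ε))] with t ht
  have ht1 : (1:ℝ) ≤ t := le_trans (le_max_left _ _) ht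
  have ht2 : 4*(D+1)/ε ≤ t := le_trans (le_max_right _ _) ht
  have htpos : 0 < t := lt_of_lt_of_le zero_lt_one ht1
  have hXt : ‖X t x‖ ≤ D + (ε/4) * t := by
    have h1 : ‖X t x‖ ≤ ‖x‖ + ‖X t x - x‖ := by
      have := norm_add_le x (X t x - x)
      simpa using this
    have h2 := hIb t (le_of_lt htpos)
    have hδ2 : δ/2 = ε/4 := by rw [hδdef]; ring
    rw [hδ2] at h2
    rw [hDdef]
    linarith
  have hsmul : ‖t⁻¹ • X t x‖ = t⁻¹ * ‖X t x‖ := by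
    rw [norm_smul, Real.norm_eq_abs, abs_inv, abs_of_pos htpos]
  rw [hsmul]
  have hDt : t⁻¹ * D < ε/4 := by
    rw [inv_mul_eq_div, div_lt_iff₀ htpos]
    have h5 : ε/4 * (4*(D+1)/ε) = D + 1 := by field_simp
    have h6 : ε/4 * (4*(D+1)/ε) ≤ ε/4 * t :=
      mul_le_mul_of_nonneg_left ht2 (by positivity)
    rw [h5] at h6
    linarith
  have hfin : t⁻¹ * ‖X t x‖ ≤ t⁻¹ * D + ε/4 := by
    have h7 : t⁻¹ * ‖X t x‖ ≤ t⁻¹ * (D + (ε/4) * t) :=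
      mul_le_mul_of_nonneg_left hXt (by positivity)
    have h8 : t⁻¹ * (D + (ε/4) * t) = t⁻¹ * D + ε/4 * (t⁻¹ * t) := by ring
    rw [h8, inv_mul_cancel₀ (ne_of_gt htpos)] at h7
    simpa using h7
  calc t⁻¹ * ‖X t x‖ ≤ t⁻¹ * D + ε/4 := hfin
    _ < ε/4 + ε/4 := by linarith
    _ < ε := by linarith
end
end
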